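/- arXiv:2408.06401 — 3 statements merged into one kernel-verified Lean document; each statement's English description precedes it below -/
import Mathlib

section
/- Let G : [0,∞) → Sym_r(ℝ) be a continuous curve of symmetric positive semi-definite matrices with all eigenvalues in [0,1], and let A solve the matrix ODE A'(t) = a G(t)(I_r - G(t)) with A(0) = G(0), where a > 0. Then for every i ∈ [r] and t ≥ 0, θ_i(G(0)) + a ∫₀ᵗ (θ_min(G(s)) - θ_max(G(s))²) ds ≤ μ_i(A(t)) ≤ θ_i(G(0)) + a ∫₀ᵗ (θ_max(G(s)) - θ_min(G(s))²) ds, where μ_i(A(t)) denotes the i-th eigenvalue of A(t) and θ_min, θ_max denote the smallest and largest eigenvalues of G. -/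
open Matrix MeasureTheory

/-- The eigenvalues of a real symmetric matrix, sorted in increasing order
(junk value `0` if the matrix is not symmetric). -/
noncomputable def sortedEigs {r : ℕ} (A : Matrix (Fin r) (Fin r) ℝ) (i : Fin r) : ℝ :=
  if hA : A.IsHermitian then
    ((Finset.univ.val.map hA.eigenvalues).sort (· ≤ ·)).getD i 0
  else 0

/-- The smallest eigenvalue of a real symmetric matrix (junk value if not symmetric). -/
noncomputable def eigMinOf {r : ℕ} (A : Matrix (Fin r) (Fin r) ℝ) : ℝ :=
  ⨅ i : Fin r, (if hA : A.IsHermitian then hA.eigenvalues i else 0)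

/-- The largest eigenvalue of a real symmetric matrix (junk value if not symmetric). -/
noncomputable def eigMaxOf {r : ℕ} (A : Matrix (Fin r) (Fin r) ℝ) : ℝ :=
  ⨆ i : Fin r, (if hA : A.IsHermitian then hA.eigenvalues i else 0)

section Aux

open Filter

namespace RiccatiAux

lemma sort_getD {r : ℕ} (f : Fin r → ℝ) (i : Fin r) :
    ((Finset.univ.val.map f).sort (· ≤ ·)).getD i 0 = (f ∘ Tuple.sort f) i := by
  have h1 : (Finset.univ.val.map f).sort (· ≤ ·) = List.ofFn (f ∘ Tuple.sort f) := by
    refine (fun hp h1 h2 => List.Perm.eq_of_pairwise' (r := (· ≤ ·)) h1 h2 hp) ?_ ?_ ?_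
    · rw [← Multiset.coe_eq_coe]
      rw [Multiset.sort_eq, ← Fin.univ_val_map (f ∘ Tuple.sort f), ← Multiset.map_map]
      congr 1
      exact (congrArg Finset.val (Finset.map_univ_equiv (Tuple.sort f))).symm
    · exact Multiset.pairwise_sort _ _
    · exact (List.sortedLE_ofFn_iff.2 (Tuple.monotone_sort f)).pairwise
  rw [h1, List.getD_eq_getElem _ _ (by simp [i.isLt]), List.getElem_ofFn]

variable {r : ℕ}

lemma sortedEigs_of_herm {A : Matrix (Fin r) (Fin r) ℝ} (hA : A.IsHermitian) (i : Fin r) :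
    sortedEigs A i = hA.eigenvalues (Tuple.sort hA.eigenvalues i) := by
  rw [sortedEigs, dif_pos hA, sort_getD]; rfl

lemma diag_quad (U : Matrix.unitaryGroup (Fin r) ℝ) (f : Fin r → ℝ) (x : Fin r → ℝ) :
    x ⬝ᵥ (((U : Matrix (Fin r) (Fin r) ℝ) * diagonal f * star (U : Matrix (Fin r) (Fin r) ℝ)) *ᵥ x)
      = ∑ k, f k * ((star (U : Matrix (Fin r) (Fin r) ℝ) *ᵥ x) k) ^ 2 := by
  set V := star (U : Matrix (Fin r) (Fin r) ℝ) with hV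
  have hVT : (U : Matrix (Fin r) (Fin r) ℝ)ᵀ = V := by
    rw [hV, star_eq_conjTranspose, conjTranspose_eq_transpose_of_trivial]
  rw [← mulVec_mulVec, ← mulVec_mulVec, dotProduct_mulVec, ← mulVec_transpose, hVT]
  simp only [mulVec_diagonal, dotProduct]
  exact Finset.sum_congr rfl fun k _ => by ring

lemma unitary_dot (U : Matrix.unitaryGroup (Fin r) ℝ) (x : Fin r → ℝ) :
    x ⬝ᵥ x = ∑ k, ((star (U : Matrix (Fin r) (Fin r) ℝ) *ᵥ x) k) ^ 2 := by
  have := diag_quad U (fun _ => 1) x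
  simp only [diagonal_one, one_mul] at this
  rw [← this, mul_one, (mem_unitaryGroup_iff).mp U.2, one_mulVec]

lemma quad_sum {A : Matrix (Fin r) (Fin r) ℝ} (hA : A.IsHermitian) (x : Fin r → ℝ) :
    x ⬝ᵥ (A *ᵥ x) = ∑ k, hA.eigenvalues k *
      ((star (hA.eigenvectorUnitary : Matrix (Fin r) (Fin r) ℝ) *ᵥ x) k) ^ 2 := by
  conv_lhs => rw [hA.spectral_theorem]
  have := diag_quad hA.eigenvectorUnitary (hA.eigenvalues) x
  simpa using this

lemma quad_sq_sum {A : Matrix (Fin r) (Fin r) ℝ} (hA : A.IsHermitian) (x : Fin r → ℝ) :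
    x ⬝ᵥ ((A * A) *ᵥ x) = ∑ k, hA.eigenvalues k ^ 2 *
      ((star (hA.eigenvectorUnitary : Matrix (Fin r) (Fin r) ℝ) *ᵥ x) k) ^ 2 := by
  conv_lhs => rw [hA.spectral_theorem]
  have hsq : ((hA.eigenvectorUnitary : Matrix (Fin r) (Fin r) ℝ) * diagonal (RCLike.ofReal ∘ hA.eigenvalues) * star (hA.eigenvectorUnitary : Matrix (Fin r) (Fin r) ℝ))
      * ((hA.eigenvectorUnitary : Matrix (Fin r) (Fin r) ℝ) * diagonal (RCLike.ofReal ∘ hA.eigenvalues) * star (hA.eigenvectorUnitary : Matrix (Fin r) (Fin r) ℝ))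
      = (hA.eigenvectorUnitary : Matrix (Fin r) (Fin r) ℝ) * diagonal (fun k => hA.eigenvalues k ^ 2) * star (hA.eigenvectorUnitary : Matrix (Fin r) (Fin r) ℝ) := by
    have h1 : star (hA.eigenvectorUnitary : Matrix (Fin r) (Fin r) ℝ) * (hA.eigenvectorUnitary : Matrix (Fin r) (Fin r) ℝ) = 1 :=
      (mem_unitaryGroup_iff').mp hA.eigenvectorUnitary.2
    simp only [Matrix.mul_assoc]
    rw [← Matrix.mul_assoc (star _) _, h1, Matrix.one_mul,
      ← Matrix.mul_assoc (diagonal _) (diagonal _), diagonal_mul_diagonal]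
    congr 2
    ext k
    simp [sq]
  rw [Unitary.conjStarAlgAut_apply, hsq]
  exact diag_quad hA.eigenvectorUnitary _ x


lemma eigMinOf_le {A : Matrix (Fin r) (Fin r) ℝ} (hA : A.IsHermitian) (k : Fin r) :
    eigMinOf A ≤ hA.eigenvalues k := by
  rw [eigMinOf]
  have := ciInf_le (Finite.bddBelow_range _) (f := fun i : Fin r =>
    (if hA : A.IsHermitian then hA.eigenvalues i else 0)) k
  simpa only [dif_pos hA] using this

lemma le_eigMaxOf {A : Matrix (Fin r) (Fin r) ℝ} (hA : A.IsHermitian) (k : Fin r) :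
    hA.eigenvalues k ≤ eigMaxOf A := by
  rw [eigMaxOf]
  have := le_ciSup (Finite.bddAbove_range _) (f := fun i : Fin r =>
    (if hA : A.IsHermitian then hA.eigenvalues i else 0)) k
  simpa only [dif_pos hA] using this


lemma eigMinOf_nonneg (hr : 0 < r) {A : Matrix (Fin r) (Fin r) ℝ} (hA : A.PosSemidef) :
    0 ≤ eigMinOf A := by
  haveI : Nonempty (Fin r) := ⟨⟨0, hr⟩⟩
  rw [eigMinOf]
  exact le_ciInf fun k => by rw [dif_pos hA.1]; exact hA.eigenvalues_nonneg k

lemma eigMinOf_eq (hr : 0 < r) {A : Matrix (Fin r) (Fin r) ℝ} (hA : A.IsHermitian) :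
    ∃ k, eigMinOf A = hA.eigenvalues k := by
  haveI : Nonempty (Fin r) := ⟨⟨0, hr⟩⟩
  obtain ⟨k, hk⟩ := Finite.exists_min hA.eigenvalues
  refine ⟨k, le_antisymm (eigMinOf_le hA k) ?_⟩
  rw [eigMinOf]
  exact le_ciInf fun j => by rw [dif_pos hA]; exact hk j

lemma eigMaxOf_eq (hr : 0 < r) {A : Matrix (Fin r) (Fin r) ℝ} (hA : A.IsHermitian) :
    ∃ k, eigMaxOf A = hA.eigenvalues k := by
  haveI : Nonempty (Fin r) := ⟨⟨0, hr⟩⟩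
  obtain ⟨k, hk⟩ := Finite.exists_max hA.eigenvalues
  refine ⟨k, le_antisymm ?_ (le_eigMaxOf hA k)⟩
  rw [eigMaxOf]
  exact ciSup_le fun j => by rw [dif_pos hA]; exact hk j

lemma rayleigh_lower {A : Matrix (Fin r) (Fin r) ℝ} (hA : A.IsHermitian) (x : Fin r → ℝ) :
    eigMinOf A * (x ⬝ᵥ x) ≤ x ⬝ᵥ (A *ᵥ x) := by
  rw [quad_sum hA x, unitary_dot hA.eigenvectorUnitary x, Finset.mul_sum]
  exact Finset.sum_le_sum fun k _ =>
    mul_le_mul_of_nonneg_right (eigMinOf_le hA k) (sq_nonneg _)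

lemma rayleigh_upper {A : Matrix (Fin r) (Fin r) ℝ} (hA : A.IsHermitian) (x : Fin r → ℝ) :
    x ⬝ᵥ (A *ᵥ x) ≤ eigMaxOf A * (x ⬝ᵥ x) := by
  rw [quad_sum hA x, unitary_dot hA.eigenvectorUnitary x, Finset.mul_sum]
  exact Finset.sum_le_sum fun k _ =>
    mul_le_mul_of_nonneg_right (le_eigMaxOf hA k) (sq_nonneg _)

lemma riccati_quad (hr : 0 < r) {G : Matrix (Fin r) (Fin r) ℝ} (hG : G.PosSemidef)
    (x : Fin r → ℝ) :
    (eigMinOf G - eigMaxOf G ^ 2) * (x ⬝ᵥ x) ≤ x ⬝ᵥ ((G * (1 - G)) *ᵥ x) ∧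
    x ⬝ᵥ ((G * (1 - G)) *ᵥ x) ≤ (eigMaxOf G - eigMinOf G ^ 2) * (x ⬝ᵥ x) := by
  have hG1 : G * (1 - G) = G - G * G := by rw [mul_sub, mul_one]
  have hsplit : x ⬝ᵥ ((G * (1 - G)) *ᵥ x)
      = ∑ k, (hG.1.eigenvalues k - hG.1.eigenvalues k ^ 2) *
        ((star (hG.1.eigenvectorUnitary : Matrix (Fin r) (Fin r) ℝ) *ᵥ x) k) ^ 2 := by
    rw [hG1, sub_mulVec, dotProduct_sub, quad_sum hG.1 x, quad_sq_sum hG.1 x,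
      ← Finset.sum_sub_distrib]
    exact Finset.sum_congr rfl fun k _ => by ring
  have hdot : x ⬝ᵥ x
      = ∑ k, ((star (hG.1.eigenvectorUnitary : Matrix (Fin r) (Fin r) ℝ) *ᵥ x) k) ^ 2 :=
    unitary_dot hG.1.eigenvectorUnitary x
  have h0min : 0 ≤ eigMinOf G := eigMinOf_nonneg hr hG
  constructor
  · rw [hsplit, hdot, Finset.mul_sum]
    apply Finset.sum_le_sum
    intro k _
    apply mul_le_mul_of_nonneg_right _ (sq_nonneg _)
    have h1 : eigMinOf G ≤ hG.1.eigenvalues k := eigMinOf_le hG.1 k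
    have h2 : hG.1.eigenvalues k ^ 2 ≤ eigMaxOf G ^ 2 :=
      pow_le_pow_left₀ (hG.eigenvalues_nonneg k) (le_eigMaxOf hG.1 k) 2
    linarith
  · rw [hsplit, hdot, Finset.mul_sum]
    apply Finset.sum_le_sum
    intro k _
    apply mul_le_mul_of_nonneg_right _ (sq_nonneg _)
    have h1 : hG.1.eigenvalues k ≤ eigMaxOf G := le_eigMaxOf hG.1 k
    have h2 : eigMinOf G ^ 2 ≤ hG.1.eigenvalues k ^ 2 :=
      pow_le_pow_left₀ h0min (eigMinOf_le hG.1 k) 2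
    linarith


lemma eigvec_unit {A : Matrix (Fin r) (Fin r) ℝ} (hA : A.IsHermitian) (k : Fin r) :
    (⇑(hA.eigenvectorBasis k) ⬝ᵥ ⇑(hA.eigenvectorBasis k)) = 1 := by
  have hnorm : ‖hA.eigenvectorBasis k‖ = 1 := hA.eigenvectorBasis.orthonormal.1 k
  have : ‖hA.eigenvectorBasis k‖ = Real.sqrt (∑ i, (hA.eigenvectorBasis k i) ^ 2) := by
    rw [EuclideanSpace.norm_eq]
    congr 1
    exact Finset.sum_congr rfl fun i _ => by rw [Real.norm_eq_abs, sq_abs]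
  rw [this] at hnorm
  have h2 : (∑ i, (hA.eigenvectorBasis k i) ^ 2) = 1 := by
    have h0 : 0 ≤ ∑ i, (hA.eigenvectorBasis k i) ^ 2 :=
      Finset.sum_nonneg fun i _ => sq_nonneg _
    nlinarith [Real.sq_sqrt h0]
  rw [dotProduct]
  rw [← h2]
  exact Finset.sum_congr rfl fun i _ => (sq _).symm

lemma err_bound {M : Matrix (Fin r) (Fin r) ℝ} (u : Fin r → ℝ) (hu : ∀ i, |u i| ≤ 1) :
    |u ⬝ᵥ (M *ᵥ u)| ≤ ∑ i, ∑ j, |M i j| := by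
  rw [dotProduct]
  refine (Finset.abs_sum_le_sum_abs _ _).trans (Finset.sum_le_sum fun i _ => ?_)
  rw [mulVec, dotProduct]
  rw [abs_mul]
  calc |u i| * |∑ j, M i j * u j| ≤ 1 * |∑ j, M i j * u j| :=
        mul_le_mul_of_nonneg_right (hu i) (abs_nonneg _)
  _ = |∑ j, M i j * u j| := one_mul _
  _ ≤ ∑ j, |M i j * u j| := Finset.abs_sum_le_sum_abs _ _
  _ ≤ ∑ j, |M i j| := Finset.sum_le_sum fun j _ => by
      rw [abs_mul]
      calc |M i j| * |u j| ≤ |M i j| * 1 :=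
            mul_le_mul_of_nonneg_left (hu j) (abs_nonneg _)
      _ = |M i j| := mul_one _

lemma unit_components {u : Fin r → ℝ} (hu : u ⬝ᵥ u = 1) (i : Fin r) : |u i| ≤ 1 := by
  rw [← sq_le_one_iff_abs_le_one]
  rw [dotProduct] at hu
  calc u i ^ 2 = u i * u i := sq (u i)
  _ ≤ ∑ j, u j * u j :=
      Finset.single_le_sum (f := fun j => u j * u j)
        (fun j _ => mul_self_nonneg _) (Finset.mem_univ i)
  _ = 1 := hu

lemma eigMin_one_sided (hr : 0 < r) {M N : Matrix (Fin r) (Fin r) ℝ}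
    (hM : M.IsHermitian) (hN : N.IsHermitian) :
    eigMinOf M ≤ eigMinOf N + ∑ i, ∑ j, |M i j - N i j| := by
  obtain ⟨k, hk⟩ := eigMinOf_eq hr hN
  set u : Fin r → ℝ := ⇑(hN.eigenvectorBasis k) with hu
  have hu1 : u ⬝ᵥ u = 1 := eigvec_unit hN k
  have hNu : N *ᵥ u = hN.eigenvalues k • u := hN.mulVec_eigenvectorBasis k
  have hqN : u ⬝ᵥ (N *ᵥ u) = eigMinOf N := by
    rw [hNu, dotProduct_smul, smul_eq_mul, hu1, mul_one, hk]
  have hsplit : u ⬝ᵥ (M *ᵥ u) = u ⬝ᵥ (N *ᵥ u) + u ⬝ᵥ ((M - N) *ᵥ u) := by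
    rw [sub_mulVec, dotProduct_sub]; ring
  have herr : |u ⬝ᵥ ((M - N) *ᵥ u)| ≤ ∑ i, ∑ j, |M i j - N i j| := by
    have := err_bound (M := M - N) u (unit_components hu1)
    simpa using this
  have hray : eigMinOf M ≤ u ⬝ᵥ (M *ᵥ u) := by
    have := rayleigh_lower hM u
    rwa [hu1, mul_one] at this
  have := abs_le.mp herr
  rw [hsplit, hqN] at hray
  linarith [this.2]

lemma eigMax_one_sided (hr : 0 < r) {M N : Matrix (Fin r) (Fin r) ℝ}
    (hM : M.IsHermitian) (hN : N.IsHermitian) :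
    eigMaxOf N - ∑ i, ∑ j, |M i j - N i j| ≤ eigMaxOf M := by
  obtain ⟨k, hk⟩ := eigMaxOf_eq hr hN
  set u : Fin r → ℝ := ⇑(hN.eigenvectorBasis k) with hu
  have hu1 : u ⬝ᵥ u = 1 := eigvec_unit hN k
  have hNu : N *ᵥ u = hN.eigenvalues k • u := hN.mulVec_eigenvectorBasis k
  have hqN : u ⬝ᵥ (N *ᵥ u) = eigMaxOf N := by
    rw [hNu, dotProduct_smul, smul_eq_mul, hu1, mul_one, hk]
  have hsplit : u ⬝ᵥ (M *ᵥ u) = u ⬝ᵥ (N *ᵥ u) + u ⬝ᵥ ((M - N) *ᵥ u) := by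
    rw [sub_mulVec, dotProduct_sub]; ring
  have herr : |u ⬝ᵥ ((M - N) *ᵥ u)| ≤ ∑ i, ∑ j, |M i j - N i j| := by
    have := err_bound (M := M - N) u (unit_components hu1)
    simpa using this
  have hray : u ⬝ᵥ (M *ᵥ u) ≤ eigMaxOf M := by
    have := rayleigh_upper hM u
    rwa [hu1, mul_one] at this
  have := abs_le.mp herr
  rw [hsplit, hqN] at hray
  linarith [this.1]

lemma eigMin_abs_le (hr : 0 < r) {M N : Matrix (Fin r) (Fin r) ℝ}
    (hM : M.IsHermitian) (hN : N.IsHermitian) :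
    |eigMinOf M - eigMinOf N| ≤ ∑ i, ∑ j, |M i j - N i j| := by
  rw [abs_sub_le_iff]
  constructor
  · linarith [eigMin_one_sided hr hM hN]
  · have := eigMin_one_sided hr hN hM
    have hsym : (∑ i, ∑ j, |N i j - M i j|) = ∑ i, ∑ j, |M i j - N i j| :=
      Finset.sum_congr rfl fun i _ => Finset.sum_congr rfl fun j _ => abs_sub_comm _ _
    linarith

lemma eigMax_abs_le (hr : 0 < r) {M N : Matrix (Fin r) (Fin r) ℝ}
    (hM : M.IsHermitian) (hN : N.IsHermitian) :
    |eigMaxOf M - eigMaxOf N| ≤ ∑ i, ∑ j, |M i j - N i j| := by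
  rw [abs_sub_le_iff]
  constructor
  · have := eigMax_one_sided hr hN hM
    have hsym : (∑ i, ∑ j, |N i j - M i j|) = ∑ i, ∑ j, |M i j - N i j| :=
      Finset.sum_congr rfl fun i _ => Finset.sum_congr rfl fun j _ => abs_sub_comm _ _
    linarith
  · linarith [eigMax_one_sided hr hM hN]


lemma eigMin_contOn (hr : 0 < r) {G : ℝ → Matrix (Fin r) (Fin r) ℝ}
    (hGcont : ∀ i j, Continuous fun t => G t i j)
    (hherm : ∀ s, 0 ≤ s → (G s).IsHermitian) :
    ContinuousOn (fun s => eigMinOf (G s)) (Set.Ici (0:ℝ)) := by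
  intro s0 hs0
  rw [ContinuousWithinAt, tendsto_iff_dist_tendsto_zero]
  have hg : Tendsto (fun s => ∑ i, ∑ j, |G s i j - G s0 i j|) (nhdsWithin s0 (Set.Ici 0))
      (nhds 0) := by
    have hc : Continuous (fun s => ∑ i, ∑ j, |G s i j - G s0 i j|) := by
      apply continuous_finset_sum
      intro i _
      apply continuous_finset_sum
      intro j _
      exact ((hGcont i j).sub continuous_const).abs
    have h0 : (∑ i, ∑ j, |G s0 i j - G s0 i j|) = (0:ℝ) := by simp
    have := hc.continuousWithinAt (s := Set.Ici (0:ℝ)) (x := s0)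
    rw [ContinuousWithinAt, h0] at this
    exact this
  refine squeeze_zero' (Filter.Eventually.of_forall fun s => dist_nonneg) ?_ hg
  filter_upwards [eventually_mem_nhdsWithin] with s hs
  rw [Real.dist_eq]
  exact eigMin_abs_le hr (hherm s hs) (hherm s0 hs0)


lemma eig_comp (hr : 0 < r) {A B : Matrix (Fin r) (Fin r) ℝ}
    (hA : A.IsHermitian) (hB : B.IsHermitian) {c : ℝ}
    (h : ∀ x : Fin r → ℝ, c * (x ⬝ᵥ x) ≤ x ⬝ᵥ (B *ᵥ x) - x ⬝ᵥ (A *ᵥ x)) (i : Fin r) :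
    sortedEigs A i + c ≤ sortedEigs B i := by
  classical
  set σA := Tuple.sort hA.eigenvalues with hσA
  set σB := Tuple.sort hB.eigenvalues with hσB
  set UA := (hA.eigenvectorUnitary : Matrix (Fin r) (Fin r) ℝ)
  set UB := (hB.eigenvectorUnitary : Matrix (Fin r) (Fin r) ℝ)
  -- the constraint map
  set L : (Fin r → ℝ) →ₗ[ℝ] ({j : Fin r // j ≠ i} → ℝ) :=
    LinearMap.pi (fun j => if (j : Fin r) < i
      then LinearMap.proj (σA j) ∘ₗ (star UA).mulVecLin
      else LinearMap.proj (σB j) ∘ₗ (star UB).mulVecLin) with hL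
  have hcard : Fintype.card {j : Fin r // j ≠ i} = r - 1 := by
    have : Fintype.card {j : Fin r // j ≠ i} = Fintype.card (Fin r) - 1 := by
      rw [Fintype.card_subtype_compl (fun j => j = i), Fintype.card_subtype_eq]
    simpa using this
  have hninj : ¬ Function.Injective L := by
    intro hinj
    have hle := LinearMap.finrank_le_finrank_of_injective hinj
    rw [Module.finrank_fintype_fun_eq_card, Module.finrank_fintype_fun_eq_card, hcard,
      Fintype.card_fin] at hle
    omega
  obtain ⟨u, v, huv, hne⟩ := Function.not_injective_iff.mp hninj
  set x := u - v with hx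
  have hx0 : x ≠ 0 := sub_ne_zero.mpr hne
  have hLx : L x = 0 := by rw [hx, map_sub, huv, sub_self]
  set yA := star UA *ᵥ x with hyA
  set yB := star UB *ᵥ x with hyB
  have hAconstr : ∀ j : Fin r, j ≠ i → j < i → yA (σA j) = 0 := by
    intro j hne' hlt
    have := congrFun hLx ⟨j, hne'⟩
    simpa only [hL, LinearMap.pi_apply, if_pos hlt, LinearMap.comp_apply,
      mulVecLin_apply, LinearMap.proj_apply, Pi.zero_apply] using this
  have hBconstr : ∀ j : Fin r, j ≠ i → ¬ j < i → yB (σB j) = 0 := by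
    intro j hne' hlt
    have := congrFun hLx ⟨j, hne'⟩
    simpa only [hL, LinearMap.pi_apply, if_neg hlt, LinearMap.comp_apply,
      mulVecLin_apply, LinearMap.proj_apply, Pi.zero_apply] using this
  set N := x ⬝ᵥ x with hN
  have hNpos : 0 < N := by
    obtain ⟨k, hk⟩ : ∃ k, x k ≠ 0 := by
      by_contra hcon
      push_neg at hcon
      exact hx0 (funext hcon)
    have : N = ∑ k, x k ^ 2 := by
      rw [hN, dotProduct]; exact Finset.sum_congr rfl fun k _ => (sq (x k)).symm
    rw [this]
    exact Finset.sum_pos' (fun k _ => sq_nonneg _)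
      ⟨k, Finset.mem_univ k, sq_pos_of_ne_zero hk⟩
  -- lower bound for A
  have hNA : N = ∑ j, yA (σA j) ^ 2 := by
    rw [hN, unitary_dot hA.eigenvectorUnitary x, ← Equiv.sum_comp σA]
  have hNB : N = ∑ j, yB (σB j) ^ 2 := by
    rw [hN, unitary_dot hB.eigenvectorUnitary x, ← Equiv.sum_comp σB]
  have hAq : x ⬝ᵥ (A *ᵥ x) = ∑ j, hA.eigenvalues (σA j) * yA (σA j) ^ 2 := by
    rw [quad_sum hA x, ← Equiv.sum_comp σA (fun k => hA.eigenvalues k * yA k ^ 2)]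
  have hBq : x ⬝ᵥ (B *ᵥ x) = ∑ j, hB.eigenvalues (σB j) * yB (σB j) ^ 2 := by
    rw [quad_sum hB x, ← Equiv.sum_comp σB (fun k => hB.eigenvalues k * yB k ^ 2)]
  have hlowA : sortedEigs A i * N ≤ x ⬝ᵥ (A *ᵥ x) := by
    rw [hAq, hNA, Finset.mul_sum]
    apply Finset.sum_le_sum
    intro j _
    rcases lt_trichotomy j i with hj | hj | hj
    · rw [hAconstr j (ne_of_lt hj) hj]; simp
    · subst hj; rw [sortedEigs_of_herm hA]
    · have := Tuple.monotone_sort hA.eigenvalues (le_of_lt hj : i ≤ j)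
      rw [sortedEigs_of_herm hA]
      exact mul_le_mul_of_nonneg_right this (sq_nonneg _)
  have hupB : x ⬝ᵥ (B *ᵥ x) ≤ sortedEigs B i * N := by
    rw [hBq, hNB, Finset.mul_sum]
    apply Finset.sum_le_sum
    intro j _
    rcases lt_trichotomy j i with hj | hj | hj
    · have := Tuple.monotone_sort hB.eigenvalues (le_of_lt hj : j ≤ i)
      rw [sortedEigs_of_herm hB]
      exact mul_le_mul_of_nonneg_right this (sq_nonneg _)
    · subst hj; rw [sortedEigs_of_herm hB]
    · rw [hBconstr j (ne_of_gt hj) (not_lt.mpr (le_of_lt hj))]; simp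
  have key : (sortedEigs A i + c) * N ≤ sortedEigs B i * N := by
    have h1 := h x
    calc (sortedEigs A i + c) * N = sortedEigs A i * N + c * N := by ring
    _ ≤ x ⬝ᵥ (A *ᵥ x) + (x ⬝ᵥ (B *ᵥ x) - x ⬝ᵥ (A *ᵥ x)) := add_le_add hlowA h1
    _ = x ⬝ᵥ (B *ᵥ x) := by ring
    _ ≤ sortedEigs B i * N := hupB
  exact le_of_mul_le_mul_right key hNpos

lemma eigMax_contOn (hr : 0 < r) {G : ℝ → Matrix (Fin r) (Fin r) ℝ}
    (hGcont : ∀ i j, Continuous fun t => G t i j)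
    (hherm : ∀ s, 0 ≤ s → (G s).IsHermitian) :
    ContinuousOn (fun s => eigMaxOf (G s)) (Set.Ici (0:ℝ)) := by
  intro s0 hs0
  rw [ContinuousWithinAt, tendsto_iff_dist_tendsto_zero]
  have hg : Tendsto (fun s => ∑ i, ∑ j, |G s i j - G s0 i j|) (nhdsWithin s0 (Set.Ici 0))
      (nhds 0) := by
    have hc : Continuous (fun s => ∑ i, ∑ j, |G s i j - G s0 i j|) := by
      apply continuous_finset_sum
      intro i _
      apply continuous_finset_sum
      intro j _
      exact ((hGcont i j).sub continuous_const).abs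
    have h0 : (∑ i, ∑ j, |G s0 i j - G s0 i j|) = (0:ℝ) := by simp
    have := hc.continuousWithinAt (s := Set.Ici (0:ℝ)) (x := s0)
    rw [ContinuousWithinAt, h0] at this
    exact this
  refine squeeze_zero' (Filter.Eventually.of_forall fun s => dist_nonneg) ?_ hg
  filter_upwards [eventually_mem_nhdsWithin] with s hs
  rw [Real.dist_eq]
  exact eigMax_abs_le hr (hherm s hs) (hherm s0 hs0)

lemma dot_expand (M : Matrix (Fin r) (Fin r) ℝ) (x : Fin r → ℝ) :
    x ⬝ᵥ (M *ᵥ x) = ∑ p, ∑ q, x p * M p q * x q := by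
  simp [dotProduct, mulVec, Finset.mul_sum, mul_assoc]

end RiccatiAux

end Aux

/-- **Integral comparison inequality for the eigenvalues of the solution of the
matrix Riccati ODE `A' = a G (I - G)`, `A 0 = G 0`.** -/
theorem matrix_riccati_eigenvalue_comparison
    {r : ℕ} (hr : 0 < r) (a : ℝ) (ha : 0 < a)
    (G A : ℝ → Matrix (Fin r) (Fin r) ℝ)
    (hGcont : ∀ i j, Continuous fun t => G t i j)
    (hGpsd : ∀ t, 0 ≤ t → (G t).PosSemidef)
    (hGeig : ∀ t, 0 ≤ t → ∀ i, sortedEigs (G t) i ∈ Set.Icc (0 : ℝ) 1)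
    (hAsymm : ∀ t, (A t).IsHermitian)
    (hODE : ∀ t, 0 ≤ t → ∀ i j,
      HasDerivAt (fun s => A s i j) (a * (G t * (1 - G t)) i j) t)
    (hA0 : A 0 = G 0) :
    ∀ (i : Fin r) (t : ℝ), 0 ≤ t →
      sortedEigs (G 0) i + a * ∫ s in (0 : ℝ)..t, (eigMinOf (G s) - eigMaxOf (G s) ^ 2)
          ≤ sortedEigs (A t) i ∧
      sortedEigs (A t) i
          ≤ sortedEigs (G 0) i + a * ∫ s in (0 : ℝ)..t, (eigMaxOf (G s) - eigMinOf (G s) ^ 2) := by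
  intro i t ht
  have hGherm : ∀ s, 0 ≤ s → (G s).IsHermitian := fun s hs => (hGpsd s hs).1
  set fmin : ℝ → ℝ := fun s => eigMinOf (G s) - eigMaxOf (G s) ^ 2 with hfmin
  set fmax : ℝ → ℝ := fun s => eigMaxOf (G s) - eigMinOf (G s) ^ 2 with hfmax
  have hsub : Set.uIcc (0:ℝ) t ⊆ Set.Ici 0 := by
    rw [Set.uIcc_of_le ht]; exact fun s hs => hs.1
  have hminc : ContinuousOn (fun s => eigMinOf (G s)) (Set.Ici (0:ℝ)) :=
    RiccatiAux.eigMin_contOn hr hGcont hGherm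
  have hmaxc : ContinuousOn (fun s => eigMaxOf (G s)) (Set.Ici (0:ℝ)) :=
    RiccatiAux.eigMax_contOn hr hGcont hGherm
  have hfminInt : IntervalIntegrable fmin volume 0 t :=
    ((hminc.sub (hmaxc.pow 2)).mono hsub).intervalIntegrable
  have hfmaxInt : IntervalIntegrable fmax volume 0 t :=
    ((hmaxc.sub (hminc.pow 2)).mono hsub).intervalIntegrable
  have hGGcont : ∀ p q, Continuous fun s => (G s * (1 - G s)) p q := by
    intro p q
    have hrw : (fun s => (G s * (1 - G s)) p q)
        = fun s => ∑ k, G s p k * ((1 : Matrix (Fin r) (Fin r) ℝ) k q - G s k q) := by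
      funext s
      rw [Matrix.mul_apply]
      exact Finset.sum_congr rfl fun k _ => by rw [Matrix.sub_apply]
    rw [hrw]
    exact continuous_finset_sum _ fun k _ =>
      (hGcont p k).mul (continuous_const.sub (hGcont k q))
  -- FTC for each entry
  have key : ∀ p q : Fin r, A t p q - A 0 p q
      = ∫ s in (0:ℝ)..t, a * (G s * (1 - G s)) p q := by
    intro p q
    refine (intervalIntegral.integral_eq_sub_of_hasDerivAt
      (f := fun s => A s p q) (f' := fun s => a * (G s * (1 - G s)) p q) ?_ ?_).symm
    · intro s hs
      exact hODE s (hsub hs) p q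
    · exact (continuous_const.mul (hGGcont p q)).intervalIntegrable _ _
  -- quadratic form identity
  have hquad : ∀ x : Fin r → ℝ, x ⬝ᵥ (A t *ᵥ x) - x ⬝ᵥ (A 0 *ᵥ x)
      = ∫ s in (0:ℝ)..t, a * (x ⬝ᵥ ((G s * (1 - G s)) *ᵥ x)) := by
    intro x
    have hint : ∀ p q : Fin r,
        IntervalIntegrable (fun s => x p * (a * (G s * (1 - G s)) p q) * x q) volume 0 t :=
      fun p q => (((continuous_const.mul (continuous_const.mul (hGGcont p q))).mul
        continuous_const)).intervalIntegrable _ _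
    have hcont2 : ∀ p : Fin r,
        Continuous fun s => ∑ q, x p * (a * (G s * (1 - G s)) p q) * x q :=
      fun p => continuous_finset_sum _ fun q _ =>
        (continuous_const.mul (continuous_const.mul (hGGcont p q))).mul continuous_const
    calc x ⬝ᵥ (A t *ᵥ x) - x ⬝ᵥ (A 0 *ᵥ x)
        = ∑ p, ∑ q, x p * (A t p q - A 0 p q) * x q := by
          rw [RiccatiAux.dot_expand, RiccatiAux.dot_expand, ← Finset.sum_sub_distrib]
          refine Finset.sum_congr rfl fun p _ => ?_
          rw [← Finset.sum_sub_distrib]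
          exact Finset.sum_congr rfl fun q _ => by ring
      _ = ∑ p, ∑ q, ∫ s in (0:ℝ)..t, x p * (a * (G s * (1 - G s)) p q) * x q := by
          refine Finset.sum_congr rfl fun p _ => Finset.sum_congr rfl fun q _ => ?_
          rw [key p q, ← intervalIntegral.integral_const_mul,
            ← intervalIntegral.integral_mul_const]
      _ = ∑ p, ∫ s in (0:ℝ)..t, ∑ q, x p * (a * (G s * (1 - G s)) p q) * x q := by
          exact Finset.sum_congr rfl fun p _ =>
            (intervalIntegral.integral_finset_sum fun q _ => hint p q).symm
      _ = ∫ s in (0:ℝ)..t, ∑ p, ∑ q, x p * (a * (G s * (1 - G s)) p q) * x q :=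
          (intervalIntegral.integral_finset_sum fun p _ =>
            (hcont2 p).intervalIntegrable _ _).symm
      _ = ∫ s in (0:ℝ)..t, a * (x ⬝ᵥ ((G s * (1 - G s)) *ᵥ x)) := by
          apply intervalIntegral.integral_congr
          intro s _
          dsimp only
          rw [RiccatiAux.dot_expand, Finset.mul_sum]
          refine Finset.sum_congr rfl fun p _ => ?_
          rw [Finset.mul_sum]
          exact Finset.sum_congr rfl fun q _ => by ring
  have hqc : ∀ x : Fin r → ℝ, Continuous fun s => a * (x ⬝ᵥ ((G s * (1 - G s)) *ᵥ x)) := by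
    intro x
    have hrw : (fun s => x ⬝ᵥ ((G s * (1 - G s)) *ᵥ x))
        = fun s => ∑ p, ∑ q, x p * (G s * (1 - G s)) p q * x q :=
      funext fun s => RiccatiAux.dot_expand _ x
    apply continuous_const.mul
    rw [hrw]
    exact continuous_finset_sum _ fun p _ => continuous_finset_sum _ fun q _ =>
      (continuous_const.mul (hGGcont p q)).mul continuous_const
  -- lower bound on the quadratic form increment
  have hlow : ∀ x : Fin r → ℝ,
      (a * ∫ s in (0:ℝ)..t, fmin s) * (x ⬝ᵥ x) ≤ x ⬝ᵥ (A t *ᵥ x) - x ⬝ᵥ (A 0 *ᵥ x) := by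
    intro x
    rw [hquad x]
    have hmono := intervalIntegral.integral_mono_on ht
      ((hfminInt.const_mul a).mul_const (x ⬝ᵥ x)) ((hqc x).intervalIntegrable 0 t)
      (fun s hs => by
        have h := (RiccatiAux.riccati_quad hr (hGpsd s hs.1) x).1
        calc a * fmin s * (x ⬝ᵥ x) = a * (fmin s * (x ⬝ᵥ x)) := mul_assoc _ _ _
        _ ≤ a * (x ⬝ᵥ ((G s * (1 - G s)) *ᵥ x)) := mul_le_mul_of_nonneg_left h ha.le)
    have heq : (∫ s in (0:ℝ)..t, a * fmin s * (x ⬝ᵥ x))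
        = (a * ∫ s in (0:ℝ)..t, fmin s) * (x ⬝ᵥ x) := by
      rw [intervalIntegral.integral_mul_const, intervalIntegral.integral_const_mul]
    linarith [hmono, heq.le]
  have hup : ∀ x : Fin r → ℝ,
      x ⬝ᵥ (A t *ᵥ x) - x ⬝ᵥ (A 0 *ᵥ x) ≤ (a * ∫ s in (0:ℝ)..t, fmax s) * (x ⬝ᵥ x) := by
    intro x
    rw [hquad x]
    have hmono := intervalIntegral.integral_mono_on ht
      ((hqc x).intervalIntegrable 0 t) ((hfmaxInt.const_mul a).mul_const (x ⬝ᵥ x))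
      (fun s hs => by
        have h := (RiccatiAux.riccati_quad hr (hGpsd s hs.1) x).2
        calc a * (x ⬝ᵥ ((G s * (1 - G s)) *ᵥ x)) ≤ a * (fmax s * (x ⬝ᵥ x)) :=
              mul_le_mul_of_nonneg_left h ha.le
        _ = a * fmax s * (x ⬝ᵥ x) := (mul_assoc _ _ _).symm)
    have heq : (∫ s in (0:ℝ)..t, a * fmax s * (x ⬝ᵥ x))
        = (a * ∫ s in (0:ℝ)..t, fmax s) * (x ⬝ᵥ x) := by
      rw [intervalIntegral.integral_mul_const, intervalIntegral.integral_const_mul]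
    linarith [hmono, heq.le]
  rw [← hA0]
  constructor
  · exact RiccatiAux.eig_comp hr (hAsymm 0) (hAsymm t) (fun x => hlow x) i
  · have := RiccatiAux.eig_comp hr (hAsymm t) (hAsymm 0)
      (c := -(a * ∫ s in (0:ℝ)..t, fmax s)) (fun x => by
        have := hup x
        linarith [hup x]) i
    linarith
end

section
/- Let G : [0,∞) → Sym_r(ℝ) be a continuous curve of symmetric positive semi-definite matrices, and let A solve A'(t) = a G(t)(I_r - G(t)) with A(0) = G(0), a > 0. Then for every i ∈ [r] and every t ≥ 0 such that θ_max(G(s)) ≤ 1/2 for all s ≤ t, one has θ_i(G(0)) + a ∫₀ᵗ (θ_min(G(s)) - θ_min(G(s))²) ds ≤ μ_i(A(t)) ≤ θ_i(G(0)) + a ∫₀ᵗ (θ_max(G(s)) - θ_max(G(s))²) ds. -/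
open Matrix MeasureTheory

open scoped RealInnerProductSpace

namespace RiccatiAux

def vec {r : ℕ} (x : EuclideanSpace ℝ (Fin r)) : Fin r → ℝ := x

variable {r : ℕ}

lemma dot_eq_inner (y z : EuclideanSpace ℝ (Fin r)) :
    dotProduct (vec y) (vec z) = ⟪y, z⟫ := by
  simp [PiLp.inner_apply, dotProduct, vec]
  exact Finset.sum_congr rfl fun i _ => mul_comm _ _

lemma msort_eq_ofFn (n : ℕ) (f : Fin n → ℝ) :
    (Finset.univ.val.map f).sort (· ≤ ·) = List.ofFn (f ∘ Tuple.sort f) := by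
  apply fun hp hs => List.Perm.eq_of_pairwise' (Multiset.pairwise_sort ..) hs hp
  · rw [← Multiset.coe_eq_coe]
    rw [Multiset.sort_eq, List.ofFn_eq_map, ← Multiset.map_coe]
    have h1 : ((List.finRange n : List (Fin n)) : Multiset (Fin n)) = Finset.univ.val := by
      simp [Fin.univ_def]
    have h2 : Multiset.map (⇑(Tuple.sort f)) Finset.univ.val = Finset.univ.val :=
      congrArg Finset.val (Finset.map_univ_equiv (Tuple.sort f))
    rw [h1, ← Multiset.map_map, h2]
  · rw [← List.sortedLE_iff_pairwise, List.sortedLE_ofFn_iff]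
    exact Tuple.monotone_sort f

lemma sortedEigs_eq {M : Matrix (Fin r) (Fin r) ℝ} (hM : M.IsHermitian) (i : Fin r) :
    sortedEigs M i = hM.eigenvalues (Tuple.sort hM.eigenvalues i) := by
  rw [sortedEigs, dif_pos hM, msort_eq_ofFn]
  rw [List.getD_eq_getElem?_getD]
  simp

lemma quad_expand {M : Matrix (Fin r) (Fin r) ℝ} (hM : Mᵀ = M)
    {b : OrthonormalBasis (Fin r) ℝ (EuclideanSpace ℝ (Fin r))}
    {μ : Fin r → ℝ} (hb : ∀ j, M *ᵥ vec (b j) = μ j • vec (b j))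
    (x : EuclideanSpace ℝ (Fin r)) :
    dotProduct (vec x) (M *ᵥ vec x) = ∑ j, μ j * ⟪b j, x⟫ ^ 2 ∧
    dotProduct (vec x) (vec x) = ∑ j, ⟪b j, x⟫ ^ 2 := by
  set y : EuclideanSpace ℝ (Fin r) := (WithLp.equiv 2 (Fin r → ℝ)).symm (M *ᵥ vec x) with hy
  have hyc : vec y = M *ᵥ vec x := rfl
  have hbin : ∀ j, ⟪b j, y⟫ = μ j * ⟪b j, x⟫ := by
    intro j
    rw [← dot_eq_inner, hyc, dotProduct_mulVec, ← mulVec_transpose, hM, hb j]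
    rw [← dot_eq_inner]
    simp only [smul_dotProduct, smul_eq_mul]
  constructor
  · have h1 : dotProduct (vec x) (M *ᵥ vec x) = ⟪x, y⟫ := dot_eq_inner x y
    rw [h1, ← b.sum_inner_mul_inner x y]
    refine Finset.sum_congr rfl fun j _ => ?_
    rw [hbin j, real_inner_comm x (b j)]
    ring
  · rw [dot_eq_inner x x, ← b.sum_inner_mul_inner x x]
    refine Finset.sum_congr rfl fun j _ => ?_
    rw [real_inner_comm x (b j)]
    ring

lemma herm_transpose {M : Matrix (Fin r) (Fin r) ℝ} (hM : M.IsHermitian) : Mᵀ = M := by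
  ext p q
  simpa using congrFun (congrFun hM p) q

lemma eigen_mulVec {M : Matrix (Fin r) (Fin r) ℝ} (hM : M.IsHermitian) (j : Fin r) :
    M *ᵥ vec (hM.eigenvectorBasis j) = hM.eigenvalues j • vec (hM.eigenvectorBasis j) :=
  hM.mulVec_eigenvectorBasis j

lemma pos_dot_self {x : EuclideanSpace ℝ (Fin r)} (hx : x ≠ 0) :
    0 < dotProduct (vec x) (vec x) := by
  have h : ∃ i, vec x i ≠ 0 := by
    by_contra h
    push_neg at h
    exact hx (by ext i; exact h i)
  obtain ⟨i, hi⟩ := h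
  have : (0:ℝ) < ∑ j, vec x j * vec x j := by
    apply Finset.sum_pos' (fun j _ => mul_self_nonneg _)
    exact ⟨i, Finset.mem_univ i, mul_self_pos.mpr hi⟩
  simpa [dotProduct] using this

lemma weyl_master (hr : 0 < r) {M N : Matrix (Fin r) (Fin r) ℝ}
    (hM : M.IsHermitian) (hN : N.IsHermitian) (c : ℝ)
    (h : ∀ x : EuclideanSpace ℝ (Fin r),
      dotProduct (vec x) (N *ᵥ vec x) ≤
        dotProduct (vec x) (M *ᵥ vec x) + c * dotProduct (vec x) (vec x)) :
    ∀ i, sortedEigs N i ≤ sortedEigs M i + c := by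
  intro i
  set σM := Tuple.sort hM.eigenvalues with hσM
  set σN := Tuple.sort hN.eigenvalues with hσN
  set v := hM.eigenvectorBasis with hv
  set w := hN.eigenvectorBasis with hw
  -- the test vector
  set u : Fin r → EuclideanSpace ℝ (Fin r) :=
    fun j => if j < i then w (σN j) else v (σM j) with hu
  set L : EuclideanSpace ℝ (Fin r) →ₗ[ℝ] ({j : Fin r // j ≠ i} → ℝ) :=
    LinearMap.pi (fun j => (innerSL ℝ (u j.1)).toLinearMap) with hL
  obtain ⟨x, hx0, hLx⟩ : ∃ x, x ≠ 0 ∧ L x = 0 := by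
    have hlt : Module.finrank ℝ ({j : Fin r // j ≠ i} → ℝ)
        < Module.finrank ℝ (EuclideanSpace ℝ (Fin r)) := by
      simp [Module.finrank_pi, finrank_euclideanSpace, Fintype.card_subtype_compl]
      omega
    have := LinearMap.ker_ne_bot_of_finrank_lt (f := L) hlt
    rw [Submodule.ne_bot_iff] at this
    obtain ⟨x, hx, hx0⟩ := this
    exact ⟨x, hx0, hx⟩
  have hcoord : ∀ j : Fin r, j ≠ i → ⟪u j, x⟫ = 0 := by
    intro j hj
    have := congrFun hLx ⟨j, hj⟩
    simpa [hL] using this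
  have hNort : ∀ j : Fin r, j < i → ⟪w (σN j), x⟫ = 0 := by
    intro j hj
    have := hcoord j (ne_of_lt hj)
    simpa [hu, if_pos hj] using this
  have hMort : ∀ j : Fin r, i < j → ⟪v (σM j), x⟫ = 0 := by
    intro j hj
    have := hcoord j (ne_of_gt hj)
    simpa [hu, if_neg (not_lt.mpr (le_of_lt hj))] using this
  obtain ⟨hqM, hSM⟩ := quad_expand (herm_transpose hM) (eigen_mulVec hM) x
  obtain ⟨hqN, hSN⟩ := quad_expand (herm_transpose hN) (eigen_mulVec hN) x
  set S := dotProduct (vec x) (vec x) with hS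
  have hSpos : 0 < S := pos_dot_self hx0
  -- reindex
  have hqN' : dotProduct (vec x) (N *ᵥ vec x)
      = ∑ j, hN.eigenvalues (σN j) * ⟪w (σN j), x⟫ ^ 2 := by
    rw [hqN, ← Equiv.sum_comp σN (fun j => hN.eigenvalues j * ⟪w j, x⟫ ^ 2)]
  have hSN' : S = ∑ j, ⟪w (σN j), x⟫ ^ 2 := by
    rw [hSN, ← Equiv.sum_comp σN (fun j => ⟪w j, x⟫ ^ 2)]
  have hqM' : dotProduct (vec x) (M *ᵥ vec x)
      = ∑ j, hM.eigenvalues (σM j) * ⟪v (σM j), x⟫ ^ 2 := by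
    rw [hqM, ← Equiv.sum_comp σM (fun j => hM.eigenvalues j * ⟪v j, x⟫ ^ 2)]
  have hSM' : S = ∑ j, ⟪v (σM j), x⟫ ^ 2 := by
    rw [hSM, ← Equiv.sum_comp σM (fun j => ⟪v j, x⟫ ^ 2)]
  -- lower bound on N form
  have hlow : hN.eigenvalues (σN i) * S ≤ dotProduct (vec x) (N *ᵥ vec x) := by
    rw [hqN', hSN', Finset.mul_sum]
    apply Finset.sum_le_sum
    intro j _
    rcases lt_trichotomy j i with hj | hj | hj
    · rw [hNort j hj]; simp
    · exact le_of_eq (by rw [hj])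
    · have hmono := Tuple.monotone_sort hN.eigenvalues (le_of_lt hj : i ≤ j)
      simp only [Function.comp_apply] at hmono
      exact mul_le_mul_of_nonneg_right hmono (sq_nonneg _)
  -- upper bound on M form
  have hup : dotProduct (vec x) (M *ᵥ vec x) ≤ hM.eigenvalues (σM i) * S := by
    rw [hqM', hSM', Finset.mul_sum]
    apply Finset.sum_le_sum
    intro j _
    rcases lt_trichotomy j i with hj | hj | hj
    · have hmono := Tuple.monotone_sort hM.eigenvalues (le_of_lt hj : j ≤ i)
      simp only [Function.comp_apply] at hmono
      exact mul_le_mul_of_nonneg_right hmono (sq_nonneg _)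
    · exact le_of_eq (by rw [hj])
    · rw [hMort j hj]; simp
  have key : hN.eigenvalues (σN i) * S ≤ (hM.eigenvalues (σM i) + c) * S := by
    calc hN.eigenvalues (σN i) * S ≤ dotProduct (vec x) (N *ᵥ vec x) := hlow
      _ ≤ dotProduct (vec x) (M *ᵥ vec x) + c * S := h x
      _ ≤ hM.eigenvalues (σM i) * S + c * S := by linarith
      _ = (hM.eigenvalues (σM i) + c) * S := by ring
  have := le_of_mul_le_mul_right key hSpos
  rw [sortedEigs_eq hM, sortedEigs_eq hN]
  exact this

lemma eigMaxOf_herm {M : Matrix (Fin r) (Fin r) ℝ} (hM : M.IsHermitian) :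
    eigMaxOf M = ⨆ j, hM.eigenvalues j := by
  simp only [eigMaxOf, dif_pos hM]

lemma eigMinOf_herm {M : Matrix (Fin r) (Fin r) ℝ} (hM : M.IsHermitian) :
    eigMinOf M = ⨅ j, hM.eigenvalues j := by
  simp only [eigMinOf, dif_pos hM]

lemma le_eigMaxOf_s7 (hr : 0 < r) {M : Matrix (Fin r) (Fin r) ℝ} (hM : M.IsHermitian) (j : Fin r) :
    hM.eigenvalues j ≤ eigMaxOf M := by
  haveI : Nonempty (Fin r) := ⟨⟨0, hr⟩⟩
  rw [eigMaxOf_herm hM]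
  exact le_ciSup (Set.Finite.bddAbove (Set.finite_range _)) j

lemma eigMinOf_le_s7 (hr : 0 < r) {M : Matrix (Fin r) (Fin r) ℝ} (hM : M.IsHermitian) (j : Fin r) :
    eigMinOf M ≤ hM.eigenvalues j := by
  haveI : Nonempty (Fin r) := ⟨⟨0, hr⟩⟩
  rw [eigMinOf_herm hM]
  exact ciInf_le (Set.Finite.bddBelow (Set.finite_range _)) j

lemma exists_eigMaxOf (hr : 0 < r) {M : Matrix (Fin r) (Fin r) ℝ} (hM : M.IsHermitian) :
    ∃ j, eigMaxOf M = hM.eigenvalues j := by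
  haveI : Nonempty (Fin r) := ⟨⟨0, hr⟩⟩
  obtain ⟨j, hj⟩ := exists_eq_ciSup_of_finite (f := hM.eigenvalues)
  exact ⟨j, by rw [eigMaxOf_herm hM, ← hj]⟩

lemma exists_eigMinOf (hr : 0 < r) {M : Matrix (Fin r) (Fin r) ℝ} (hM : M.IsHermitian) :
    ∃ j, eigMinOf M = hM.eigenvalues j := by
  haveI : Nonempty (Fin r) := ⟨⟨0, hr⟩⟩
  obtain ⟨j, hj⟩ := exists_eq_ciInf_of_finite (f := hM.eigenvalues)
  exact ⟨j, by rw [eigMinOf_herm hM, ← hj]⟩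

lemma quad_bounds (hr : 0 < r) {M : Matrix (Fin r) (Fin r) ℝ} (hM : M.IsHermitian)
    (x : EuclideanSpace ℝ (Fin r)) :
    eigMinOf M * dotProduct (vec x) (vec x) ≤ dotProduct (vec x) (M *ᵥ vec x) ∧
    dotProduct (vec x) (M *ᵥ vec x) ≤ eigMaxOf M * dotProduct (vec x) (vec x) := by
  obtain ⟨hq, hSx⟩ := quad_expand (herm_transpose hM) (eigen_mulVec hM) x
  constructor
  · rw [hq, hSx, Finset.mul_sum]
    exact Finset.sum_le_sum fun j _ =>
      mul_le_mul_of_nonneg_right (eigMinOf_le_s7 hr hM j) (sq_nonneg _)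
  · rw [hq, hSx, Finset.mul_sum]
    exact Finset.sum_le_sum fun j _ =>
      mul_le_mul_of_nonneg_right (le_eigMaxOf_s7 hr hM j) (sq_nonneg _)

lemma unit_eig {M : Matrix (Fin r) (Fin r) ℝ} (hM : M.IsHermitian) (j : Fin r) :
    dotProduct (vec (hM.eigenvectorBasis j)) (vec (hM.eigenvectorBasis j)) = 1 ∧
    dotProduct (vec (hM.eigenvectorBasis j)) (M *ᵥ vec (hM.eigenvectorBasis j))
      = hM.eigenvalues j := by
  have h1 : dotProduct (vec (hM.eigenvectorBasis j)) (vec (hM.eigenvectorBasis j)) = 1 := by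
    rw [dot_eq_inner]
    rw [real_inner_self_eq_norm_sq]
    rw [hM.eigenvectorBasis.orthonormal.1 j]
    norm_num
  refine ⟨h1, ?_⟩
  rw [eigen_mulVec hM j]
  rw [dotProduct_smul, smul_eq_mul, h1, mul_one]

lemma abs_dq_le {M : Matrix (Fin r) (Fin r) ℝ} {v : Fin r → ℝ} (hv : ∀ p, |v p| ≤ 1) :
    dotProduct v (M *ᵥ v) ≤ ∑ p, ∑ q, |M p q| := by
  refine le_trans (le_abs_self _) ?_
  unfold dotProduct mulVec
  refine le_trans (Finset.abs_sum_le_sum_abs _ _) (Finset.sum_le_sum fun p _ => ?_)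
  rw [abs_mul]
  calc |v p| * |(fun j => ∑ q, M j q * v q) p|
      ≤ 1 * |∑ q, M p q * v q| := by
        exact mul_le_mul_of_nonneg_right (hv p) (abs_nonneg _)
    _ = |∑ q, M p q * v q| := one_mul _
    _ ≤ ∑ q, |M p q * v q| := Finset.abs_sum_le_sum_abs _ _
    _ ≤ ∑ q, |M p q| := Finset.sum_le_sum fun q _ => by
        rw [abs_mul]
        calc |M p q| * |v q| ≤ |M p q| * 1 :=
              mul_le_mul_of_nonneg_left (hv q) (abs_nonneg _)
          _ = |M p q| := mul_one _

lemma abs_unit_coord {v : Fin r → ℝ} (hv : dotProduct v v = 1) (p : Fin r) : |v p| ≤ 1 := by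
  have h1 : v p * v p ≤ 1 := by
    rw [← hv]
    unfold dotProduct
    exact Finset.single_le_sum (fun q _ => mul_self_nonneg (v q)) (Finset.mem_univ p)
  nlinarith [abs_nonneg (v p), sq_abs (v p)]

lemma eigMax_lip (hr : 0 < r) {M N : Matrix (Fin r) (Fin r) ℝ}
    (hM : M.IsHermitian) (hN : N.IsHermitian) :
    eigMaxOf M ≤ eigMaxOf N + ∑ p, ∑ q, |M p q - N p q| := by
  obtain ⟨j0, hj0⟩ := exists_eigMaxOf hr hM
  set v := vec (hM.eigenvectorBasis j0) with hvd
  obtain ⟨hunit, hqv⟩ := unit_eig hM j0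
  have habs : ∀ p, |v p| ≤ 1 := abs_unit_coord hunit
  have hsplit : dotProduct v (M *ᵥ v) = dotProduct v (N *ᵥ v) + dotProduct v ((M - N) *ᵥ v) := by
    rw [sub_mulVec, dotProduct_sub]; ring
  have h2 : dotProduct v (N *ᵥ v) ≤ eigMaxOf N := by
    have := (quad_bounds hr hN (hM.eigenvectorBasis j0)).2
    rw [hunit, mul_one] at this
    exact this
  have h3 : dotProduct v ((M - N) *ᵥ v) ≤ ∑ p, ∑ q, |M p q - N p q| := by
    have := abs_dq_le (M := M - N) habs
    simpa using this
  rw [hj0, ← hqv, hsplit]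
  linarith

lemma eigMin_lip (hr : 0 < r) {M N : Matrix (Fin r) (Fin r) ℝ}
    (hM : M.IsHermitian) (hN : N.IsHermitian) :
    eigMinOf N ≤ eigMinOf M + ∑ p, ∑ q, |M p q - N p q| := by
  obtain ⟨j0, hj0⟩ := exists_eigMinOf hr hM
  set v := vec (hM.eigenvectorBasis j0) with hvd
  obtain ⟨hunit, hqv⟩ := unit_eig hM j0
  have habs : ∀ p, |v p| ≤ 1 := abs_unit_coord hunit
  have hsplit : dotProduct v (N *ᵥ v) = dotProduct v (M *ᵥ v) + dotProduct v ((N - M) *ᵥ v) := by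
    rw [sub_mulVec, dotProduct_sub]; ring
  have h2 : eigMinOf N ≤ dotProduct v (N *ᵥ v) := by
    have := (quad_bounds hr hN (hM.eigenvectorBasis j0)).1
    rw [hunit, mul_one] at this
    exact this
  have h3 : dotProduct v ((N - M) *ᵥ v) ≤ ∑ p, ∑ q, |M p q - N p q| := by
    have := abs_dq_le (M := N - M) habs
    simp only [Matrix.sub_apply] at this ⊢
    refine le_trans this (le_of_eq ?_)
    exact Finset.sum_congr rfl fun p _ => Finset.sum_congr rfl fun q _ => abs_sub_comm _ _
  rw [hj0, ← hqv] at *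
  linarith

lemma eig_extreme_contOn (hr : 0 < r) {G : ℝ → Matrix (Fin r) (Fin r) ℝ}
    (hGcont : ∀ i j, Continuous fun t => G t i j)
    (hherm : ∀ s, 0 ≤ s → (G s).IsHermitian) (T : ℝ) :
    ContinuousOn (fun s => eigMaxOf (G s)) (Set.Icc 0 T) ∧
    ContinuousOn (fun s => eigMinOf (G s)) (Set.Icc 0 T) := by
  set δ : ℝ → ℝ → ℝ := fun s₀ s => ∑ p, ∑ q, |G s p q - G s₀ p q| with hδ
  have hδc : ∀ s₀, Continuous (δ s₀) := by
    intro s₀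
    apply continuous_finset_sum
    intro p _
    apply continuous_finset_sum
    intro q _
    exact ((hGcont p q).sub continuous_const).abs
  have hδ0 : ∀ s₀, δ s₀ s₀ = 0 := by intro s₀; simp [hδ]
  have hδsymm : ∀ s₀ s, δ s₀ s = δ s s₀ := by
    intro s₀ s
    exact Finset.sum_congr rfl fun p _ => Finset.sum_congr rfl fun q _ => abs_sub_comm _ _
  have main : ∀ f : ℝ → ℝ,
      (∀ s₀ ∈ Set.Icc (0:ℝ) T, ∀ s ∈ Set.Icc (0:ℝ) T,
        f s ≤ f s₀ + δ s₀ s ∧ f s₀ - δ s₀ s ≤ f s) →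
      ContinuousOn f (Set.Icc 0 T) := by
    intro f hf s₀ hs₀
    have hδt : Filter.Tendsto (δ s₀) (nhdsWithin s₀ (Set.Icc 0 T)) (nhds 0) := by
      have := ((hδc s₀).tendsto s₀).mono_left
        (nhdsWithin_le_nhds (s := Set.Icc (0:ℝ) T))
      rwa [hδ0 s₀] at this
    have h1 : Filter.Tendsto (fun s => f s₀ - δ s₀ s)
        (nhdsWithin s₀ (Set.Icc 0 T)) (nhds (f s₀)) := by
      simpa using Filter.Tendsto.sub (tendsto_const_nhds (x := f s₀)) hδt
    have h2 : Filter.Tendsto (fun s => f s₀ + δ s₀ s)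
        (nhdsWithin s₀ (Set.Icc 0 T)) (nhds (f s₀)) := by
      simpa using Filter.Tendsto.add (tendsto_const_nhds (x := f s₀)) hδt
    have hev : ∀ᶠ s in nhdsWithin s₀ (Set.Icc 0 T), s ∈ Set.Icc (0:ℝ) T :=
      eventually_mem_nhdsWithin
    exact tendsto_of_tendsto_of_tendsto_of_le_of_le' h1 h2
      (hev.mono fun s hs => (hf s₀ hs₀ s hs).2)
      (hev.mono fun s hs => (hf s₀ hs₀ s hs).1)
  constructor
  · apply main
    intro s₀ hs₀ s hs
    constructor
    · exact eigMax_lip hr (hherm s hs.1) (hherm s₀ hs₀.1)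
    · have := eigMax_lip hr (hherm s₀ hs₀.1) (hherm s hs.1)
      rw [show (∑ p, ∑ q, |G s₀ p q - G s p q|) = δ s₀ s from hδsymm s s₀ ▸ rfl] at this
      linarith
  · apply main
    intro s₀ hs₀ s hs
    constructor
    · have := eigMin_lip hr (hherm s₀ hs₀.1) (hherm s hs.1)
      rw [hδsymm s₀ s]
      exact this
    · have := eigMin_lip hr (hherm s hs.1) (hherm s₀ hs₀.1)
      rw [show (∑ p, ∑ q, |G s p q - G s₀ p q|) = δ s₀ s from rfl] at this
      have hsym : (∑ p, ∑ q, |G s p q - G s₀ p q|) = δ s₀ s := rfl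
      linarith

lemma riccati_eigen {Gm : Matrix (Fin r) (Fin r) ℝ} (hG : Gm.IsHermitian) (a : ℝ) (j : Fin r) :
    (a • (Gm * (1 - Gm))) *ᵥ vec (hG.eigenvectorBasis j)
      = (a * (hG.eigenvalues j - hG.eigenvalues j ^ 2)) • vec (hG.eigenvectorBasis j) := by
  set v := vec (hG.eigenvectorBasis j) with hvd
  set θ := hG.eigenvalues j with hθ
  have h1 : Gm *ᵥ v = θ • v := eigen_mulVec hG j
  rw [smul_mulVec]
  have h2 : (Gm * (1 - Gm)) *ᵥ v = (θ - θ ^ 2) • v := by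
    rw [← mulVec_mulVec]
    have h3 : (1 - Gm) *ᵥ v = v - θ • v := by rw [sub_mulVec, one_mulVec, h1]
    rw [h3, mulVec_sub, h1, mulVec_smul, h1, smul_smul]
    ext p
    simp only [Pi.sub_apply, Pi.smul_apply, smul_eq_mul]
    ring
  rw [h2, smul_smul]

lemma riccati_transpose {Gm : Matrix (Fin r) (Fin r) ℝ} (hG : Gm.IsHermitian) (a : ℝ) :
    (a • (Gm * (1 - Gm)))ᵀ = a • (Gm * (1 - Gm)) := by
  rw [transpose_smul, transpose_mul, transpose_sub, transpose_one, herm_transpose hG]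
  congr 1
  rw [sub_mul, mul_sub, one_mul, mul_one]

lemma P_quad_bounds (hr : 0 < r) {Gm : Matrix (Fin r) (Fin r) ℝ} (hpsd : Gm.PosSemidef)
    (hmax : eigMaxOf Gm ≤ 1 / 2) {a : ℝ} (ha : 0 < a) (x : EuclideanSpace ℝ (Fin r)) :
    a * (eigMinOf Gm - eigMinOf Gm ^ 2) * dotProduct (vec x) (vec x)
      ≤ dotProduct (vec x) ((a • (Gm * (1 - Gm))) *ᵥ vec x) ∧
    dotProduct (vec x) ((a • (Gm * (1 - Gm))) *ᵥ vec x)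
      ≤ a * (eigMaxOf Gm - eigMaxOf Gm ^ 2) * dotProduct (vec x) (vec x) := by
  have hG := hpsd.1
  obtain ⟨hq, hS⟩ := quad_expand (riccati_transpose hG a) (fun j => riccati_eigen hG a j) x
  have hnn : ∀ j, 0 ≤ hG.eigenvalues j := fun j => hpsd.eigenvalues_nonneg j
  have hminnn : 0 ≤ eigMinOf Gm := by
    obtain ⟨j0, hj0⟩ := exists_eigMinOf hr hG
    rw [hj0]; exact hnn j0
  have hfact : ∀ j, a * (eigMinOf Gm - eigMinOf Gm ^ 2)
      ≤ a * (hG.eigenvalues j - hG.eigenvalues j ^ 2) ∧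
      a * (hG.eigenvalues j - hG.eigenvalues j ^ 2)
      ≤ a * (eigMaxOf Gm - eigMaxOf Gm ^ 2) := by
    intro j
    have h1 := eigMinOf_le_s7 hr hG j
    have h2 := le_eigMaxOf_s7 hr hG j
    constructor
    · apply mul_le_mul_of_nonneg_left _ (le_of_lt ha)
      nlinarith
    · apply mul_le_mul_of_nonneg_left _ (le_of_lt ha)
      nlinarith
  constructor
  · rw [hq, hS, Finset.mul_sum]
    exact Finset.sum_le_sum fun j _ =>
      mul_le_mul_of_nonneg_right (hfact j).1 (sq_nonneg _)
  · rw [hq, hS, Finset.mul_sum]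
    exact Finset.sum_le_sum fun j _ =>
      mul_le_mul_of_nonneg_right (hfact j).2 (sq_nonneg _)

end RiccatiAux

open RiccatiAux in
/-- **Refined matrix Riccati eigenvalue comparison when all eigenvalues of `G`
stay below `1/2`.** -/
theorem matrix_riccati_eigenvalue_comparison_small
    {r : ℕ} (hr : 0 < r) (a : ℝ) (ha : 0 < a)
    (G A : ℝ → Matrix (Fin r) (Fin r) ℝ)
    (hGcont : ∀ i j, Continuous fun t => G t i j)
    (hGpsd : ∀ t, 0 ≤ t → (G t).PosSemidef)
    (hAsymm : ∀ t, (A t).IsHermitian)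
    (hODE : ∀ t, 0 ≤ t → ∀ i j,
      HasDerivAt (fun s => A s i j) (a * (G t * (1 - G t)) i j) t)
    (hA0 : A 0 = G 0) :
    ∀ (i : Fin r) (t : ℝ), 0 ≤ t →
      (∀ s ∈ Set.Icc (0 : ℝ) t, eigMaxOf (G s) ≤ 1 / 2) →
      sortedEigs (G 0) i
          + a * ∫ s in (0 : ℝ)..t, (eigMinOf (G s) - eigMinOf (G s) ^ 2)
          ≤ sortedEigs (A t) i ∧
      sortedEigs (A t) i
          ≤ sortedEigs (G 0) i
            + a * ∫ s in (0 : ℝ)..t, (eigMaxOf (G s) - eigMaxOf (G s) ^ 2) := by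
  intro i t ht hsmall
  have hermG : ∀ s, 0 ≤ s → (G s).IsHermitian := fun s hs => (hGpsd s hs).1
  obtain ⟨hMaxC, hMinC⟩ := eig_extreme_contOn hr hGcont hermG t
  set fM : ℝ → ℝ := fun s => eigMaxOf (G s) - eigMaxOf (G s) ^ 2 with hfM
  set fm : ℝ → ℝ := fun s => eigMinOf (G s) - eigMinOf (G s) ^ 2 with hfm
  have huIcc : Set.uIcc (0:ℝ) t = Set.Icc 0 t := Set.uIcc_of_le ht
  have hfMc : ContinuousOn fM (Set.Icc 0 t) := hMaxC.sub (hMaxC.pow 2)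
  have hfmc : ContinuousOn fm (Set.Icc 0 t) := hMinC.sub (hMinC.pow 2)
  have hintM : IntervalIntegrable fM MeasureTheory.volume 0 t := by
    apply ContinuousOn.intervalIntegrable
    rwa [huIcc]
  have hintm : IntervalIntegrable fm MeasureTheory.volume 0 t := by
    apply ContinuousOn.intervalIntegrable
    rwa [huIcc]
  have hPcont : ∀ p q, Continuous fun s => (G s * (1 - G s)) p q := by
    intro p q
    have hrepr : (fun s => (G s * (1 - G s)) p q)
        = fun s => ∑ k, G s p k * ((1 : Matrix (Fin r) (Fin r) ℝ) k q - G s k q) := by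
      funext s
      simp [Matrix.mul_apply, Matrix.sub_apply]
    rw [hrepr]
    exact continuous_finset_sum _ fun k _ =>
      (hGcont p k).mul (continuous_const.sub (hGcont k q))
  have key : ∀ x : EuclideanSpace ℝ (Fin r),
      dotProduct (vec x) (G 0 *ᵥ vec x)
          + (a * ∫ s in (0:ℝ)..t, fm s) * dotProduct (vec x) (vec x)
        ≤ dotProduct (vec x) (A t *ᵥ vec x) ∧
      dotProduct (vec x) (A t *ᵥ vec x)
        ≤ dotProduct (vec x) (G 0 *ᵥ vec x)
          + (a * ∫ s in (0:ℝ)..t, fM s) * dotProduct (vec x) (vec x) := by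
    intro x
    set S := dotProduct (vec x) (vec x) with hSdef
    set qd : ℝ → ℝ := fun s => ∑ p, ∑ q, RiccatiAux.vec x p * (a * (G s * (1 - G s)) p q * RiccatiAux.vec x q)
      with hqd
    have hqdc : Continuous qd := by
      apply continuous_finset_sum
      intro p _
      apply continuous_finset_sum
      intro q _
      exact continuous_const.mul ((continuous_const.mul (hPcont p q)).mul continuous_const)
    have hderiv : ∀ u ∈ Set.uIcc (0:ℝ) t,
        HasDerivAt (fun s => dotProduct (vec x) (A s *ᵥ vec x)) (qd u) u := by
      intro u hu
      rw [huIcc] at hu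
      have hfun : (fun s => dotProduct (vec x) (A s *ᵥ vec x))
          = fun s => ∑ p, ∑ q, RiccatiAux.vec x p * (A s p q * RiccatiAux.vec x q) := by
        funext s
        simp [dotProduct, mulVec, Finset.mul_sum]
      rw [hfun]
      apply HasDerivAt.fun_sum
      intro p _
      apply HasDerivAt.fun_sum
      intro q _
      exact ((hODE u hu.1 p q).mul_const (vec x q)).const_mul (vec x p)
    have hFTC' : ∫ s in (0:ℝ)..t, qd s
        = dotProduct (vec x) (A t *ᵥ vec x) - dotProduct (vec x) (G 0 *ᵥ vec x) := by
      have := intervalIntegral.integral_eq_sub_of_hasDerivAt hderiv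
        (hqdc.intervalIntegrable 0 t)
      simpa [hA0] using this
    have hbounds : ∀ s ∈ Set.Icc (0:ℝ) t, (a * fm s) * S ≤ qd s ∧ qd s ≤ (a * fM s) * S := by
      intro s hs
      have hpsd := hGpsd s hs.1
      have hP := P_quad_bounds hr hpsd (hsmall s hs) ha x
      have hqds : qd s = dotProduct (vec x) ((a • (G s * (1 - G s))) *ᵥ vec x) := by
        rw [hqd]
        simp only [dotProduct, mulVec, Matrix.smul_apply, smul_eq_mul, Finset.mul_sum]
      rw [hqds]
      constructor
      · exact hP.1
      · exact hP.2
    have hqint : IntervalIntegrable qd MeasureTheory.volume 0 t := hqdc.intervalIntegrable 0 t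
    have hintMS : IntervalIntegrable (fun s => (a * fM s) * S) MeasureTheory.volume 0 t :=
      (hintM.const_mul a).mul_const S
    have hintmS : IntervalIntegrable (fun s => (a * fm s) * S) MeasureTheory.volume 0 t :=
      (hintm.const_mul a).mul_const S
    have h1 : ∫ s in (0:ℝ)..t, qd s ≤ ∫ s in (0:ℝ)..t, (a * fM s) * S :=
      intervalIntegral.integral_mono_on ht hqint hintMS (fun s hs => (hbounds s hs).2)
    have h2 : ∫ s in (0:ℝ)..t, (a * fm s) * S ≤ ∫ s in (0:ℝ)..t, qd s :=
      intervalIntegral.integral_mono_on ht hintmS hqint (fun s hs => (hbounds s hs).1)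
    have hIM : ∫ s in (0:ℝ)..t, (a * fM s) * S = (a * ∫ s in (0:ℝ)..t, fM s) * S := by
      rw [intervalIntegral.integral_mul_const, intervalIntegral.integral_const_mul]
    have hIm : ∫ s in (0:ℝ)..t, (a * fm s) * S = (a * ∫ s in (0:ℝ)..t, fm s) * S := by
      rw [intervalIntegral.integral_mul_const, intervalIntegral.integral_const_mul]
    constructor
    · linarith [hFTC', h2, hIm]
    · linarith [hFTC', h1, hIM]
  have up := weyl_master hr (hermG 0 le_rfl) (hAsymm t) (a * ∫ s in (0:ℝ)..t, fM s)
    (fun x => by have := (key x).2; linarith) i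
  have lo := weyl_master hr (hAsymm t) (hermG 0 le_rfl) (-(a * ∫ s in (0:ℝ)..t, fm s))
    (fun x => by have := (key x).1; linarith) i
  constructor
  · linarith [lo]
  · exact up
end

section
/- Let Z ∈ ℝ^{N×r} have i.i.d. standard Gaussian entries and let V ∈ ℝ^{N×r} have orthogonal columns of norm √N. If X = Z((1/N)ZᵀZ)^{-1/2} (which is Haar-distributed on the normalized Stiefel manifold) and G = MᵀM with M = (1/N)VᵀX, then there exist constants C(r), c(r) > 0 such that for every t > 0, P(λ_max(G) > r/N + t) ≤ C(r) exp(-c(r) N t). -/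
open MeasureTheory Matrix

/-- Matrices over a measurable space carry the product measurable structure. -/
instance matrixMeasurableSpace {m n α : Type*} [MeasurableSpace α] :
    MeasurableSpace (Matrix m n α) :=
  (inferInstance : MeasurableSpace (m → n → α))

/-- The positive semi-definite square root of a matrix
(junk value `0` if the matrix is not positive semi-definite). -/
noncomputable def psdSqrt {n : ℕ} (A : Matrix (Fin n) (Fin n) ℝ) :
    Matrix (Fin n) (Fin n) ℝ :=
  letI := Classical.propDecidable A.PosSemidef
  if hA : A.PosSemidef then
    hA.1.eigenvectorUnitary.1 * diagonal (Real.sqrt ∘ hA.1.eigenvalues) *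
      (star hA.1.eigenvectorUnitary : Matrix (Fin n) (Fin n) ℝ)
  else 0

open Real ProbabilityTheory
open scoped ENNReal NNReal

lemma gauss_eval (a b : ℝ) (hb : b < 1/2) :
    Integrable (fun x => Real.exp (a*x + b*x^2)) (gaussianReal 0 1) ∧
    ∫ x, Real.exp (a*x + b*x^2) ∂(gaussianReal 0 1)
      = Real.exp (a^2/(2*(1-2*b))) / Real.sqrt (1-2*b) := by
  have hβ : (0:ℝ) < 1/2 - b := by linarith
  set β : ℝ := 1/2 - b with hβdef
  set m : ℝ := a/(2*β) with hmdef
  set C : ℝ := (Real.sqrt (2*π))⁻¹ * Real.exp (a^2/(2*(1-2*b))) with hCdef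
  have hkey : ∀ x : ℝ, gaussianPDFReal 0 1 x * Real.exp (a*x + b*x^2)
      = C * Real.exp (-β*(x-m)^2) := by
    intro x
    rw [gaussianPDFReal, hCdef]
    push_cast
    rw [mul_one, mul_assoc, mul_assoc, ← Real.exp_add, ← Real.exp_add]
    congr 2
    have h2 : (1-2*b) = 2*β := by rw [hβdef]; ring
    rw [h2, hmdef]
    field_simp
    ring
  have hγ : gaussianReal 0 1 = volume.withDensity
      (fun x => ((gaussianPDFReal 0 1 x).toNNReal : ℝ≥0∞)) :=
    gaussianReal_of_var_ne_zero 0 one_ne_zero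
  have hmeas : Measurable fun x => (gaussianPDFReal 0 1 x).toNNReal :=
    (measurable_gaussianPDFReal 0 1).real_toNNReal
  have hsmul : ∀ x : ℝ, ((gaussianPDFReal 0 1 x).toNNReal : ℝ) • Real.exp (a*x + b*x^2)
      = C * Real.exp (-β*(x-m)^2) := by
    intro x
    rw [smul_eq_mul, Real.coe_toNNReal _ (gaussianPDFReal_nonneg 0 1 x), hkey]
  have hint : Integrable (fun x => Real.exp (a*x + b*x^2)) (gaussianReal 0 1) := by
    rw [hγ, integrable_withDensity_iff_integrable_coe_smul hmeas]
    refine Integrable.congr ?_ (ae_of_all _ fun x => (hsmul x).symm)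
    exact ((integrable_exp_neg_mul_sq hβ).comp_sub_right m).const_mul _
  refine ⟨hint, ?_⟩
  rw [hγ, integral_withDensity_eq_integral_smul hmeas]
  calc ∫ x, ((gaussianPDFReal 0 1 x).toNNReal : ℝ≥0) • Real.exp (a*x + b*x^2)
      = ∫ x, C * Real.exp (-β*(x-m)^2) := by
        refine integral_congr_ae (ae_of_all _ fun x => ?_)
        simp only [NNReal.smul_def]
        exact hsmul x
    _ = C * ∫ x, Real.exp (-β*(x-m)^2) := by rw [integral_const_mul]
    _ = C * Real.sqrt (π/β) := by
        rw [integral_sub_right_eq_self (fun x => Real.exp (-β*x^2)) m, integral_gaussian]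
    _ = Real.exp (a^2/(2*(1-2*b))) / Real.sqrt (1-2*b) := by
        have hπ : (0:ℝ) < π := Real.pi_pos
        have h2 : (1-2*b) = 2*β := by rw [hβdef]; ring
        have e1 : Real.sqrt (π/β) = Real.sqrt π / Real.sqrt β := Real.sqrt_div hπ.le β
        have e2 : Real.sqrt (2*π) = Real.sqrt 2 * Real.sqrt π := Real.sqrt_mul (by norm_num) π
        have e3 : Real.sqrt (2*β) = Real.sqrt 2 * Real.sqrt β := Real.sqrt_mul (by norm_num) β
        have hsπ : Real.sqrt π ≠ 0 := by positivity
        have hsβ : Real.sqrt β ≠ 0 := by positivity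
        rw [hCdef, h2, e1, e2, e3]
        field_simp

lemma exp_le_inv_one_sub {x : ℝ} (hx : x < 1) : Real.exp x ≤ (1-x)⁻¹ := by
  have h1 : 1 - x ≤ Real.exp (-x) := by have := Real.add_one_le_exp (-x); linarith
  have h2 : (0:ℝ) < 1 - x := by linarith
  calc Real.exp x = (Real.exp (-x))⁻¹ := by rw [Real.exp_neg, inv_inv]
    _ ≤ (1-x)⁻¹ := by exact inv_anti₀ h2 h1

lemma inv_one_sub_le_exp {x : ℝ} (h0 : 0 ≤ x) (h4 : x ≤ 1/4) :
    (1-x)⁻¹ ≤ Real.exp (x + x^2) := by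
  have h2 : (0:ℝ) < 1 - x := by linarith
  have ha : (1-x)⁻¹ ≤ 1 + x + (4/3)*x^2 := by
    rw [inv_le_iff_one_le_mul₀ h2]
    nlinarith
  have hb : 1 + x + (4/3)*x^2 ≤ (1 + (x+x^2)/3)^3 := by nlinarith [sq_nonneg (x+x^2), pow_nonneg (by positivity : (0:ℝ) ≤ x + x^2) 3, sq_nonneg x, mul_nonneg (mul_nonneg h0 h0) h0]
  have hc : (1 + (x+x^2)/3)^3 ≤ Real.exp (x + x^2) := by
    have h1 : 1 + (x+x^2)/3 ≤ Real.exp ((x+x^2)/3) := by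
      have := Real.add_one_le_exp ((x+x^2)/3); linarith
    calc (1 + (x+x^2)/3)^3 ≤ (Real.exp ((x+x^2)/3))^3 := by
          apply pow_le_pow_left₀ (by nlinarith) h1
      _ = Real.exp (x + x^2) := by
          rw [← Real.exp_nat_mul]; ring_nf
  linarith

lemma sqrt_inv_le_exp {y z : ℝ} (h2 : 0 < 1 - y) (h : (1-y)⁻¹ ≤ Real.exp z) :
    (Real.sqrt (1-y))⁻¹ ≤ Real.exp (z/2) := by
  rw [Real.exp_half, ← Real.sqrt_inv]
  exact Real.sqrt_le_sqrt h

lemma bound_diag {z : ℝ} (hz : |z| ≤ 1/8) :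
    Real.exp (-z) / Real.sqrt (1-2*z) ≤ Real.exp (2*z^2) := by
  have habs := abs_le.mp hz
  rcases le_or_gt 0 z with h0 | h0
  · have h1 : ((1:ℝ)-2*z)⁻¹ ≤ Real.exp (2*z + (2*z)^2) :=
      inv_one_sub_le_exp (by linarith) (by linarith)
    have h2 : (Real.sqrt (1-2*z))⁻¹ ≤ Real.exp ((2*z + (2*z)^2)/2) :=
      sqrt_inv_le_exp (by linarith) h1
    rw [div_eq_mul_inv]
    calc Real.exp (-z) * (Real.sqrt (1-2*z))⁻¹
        ≤ Real.exp (-z) * Real.exp ((2*z + (2*z)^2)/2) := by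
          apply mul_le_mul_of_nonneg_left h2 (Real.exp_nonneg _)
      _ = Real.exp (-z + (2*z + (2*z)^2)/2) := by rw [← Real.exp_add]
      _ = Real.exp (2*z^2) := by ring_nf
  · -- z < 0;  1 - 2z = 1 + 2|z| > 1
    have hx : (2*(-z))/(1-2*z) < 1 := by
      rw [div_lt_one (by linarith)]; linarith
    have hgt : (0:ℝ) < 1 - 2*z := by linarith
    have h1 : ((1:ℝ)-2*z)⁻¹ ≤ Real.exp (-((2*(-z))/(1-2*z))) := by
      have := exp_le_inv_one_sub hx
      have hrw : (1 - (2*(-z))/(1-2*z)) = (1-2*z)⁻¹ := by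
        field_simp
        ring
      rw [hrw, inv_inv] at this
      have h5 := inv_anti₀ (Real.exp_pos _) this
      rwa [← Real.exp_neg] at h5
    have h2 : (Real.sqrt (1-2*z))⁻¹ ≤ Real.exp ((-((2*(-z))/(1-2*z)))/2) :=
      sqrt_inv_le_exp hgt h1
    rw [div_eq_mul_inv]
    have h3 : -z + (-((2*(-z))/(1-2*z)))/2 ≤ 2*z^2 := by
      have he : -z + (-((2*(-z))/(1-2*z)))/2 = 2*z^2 / (1-2*z) := by
        have hinv : (1-2*z) * (1-2*z)⁻¹ = 1 := mul_inv_cancel₀ hgt.ne'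
        rw [eq_div_iff hgt.ne']; linear_combination z * hinv
      rw [he, div_le_iff₀ hgt]
      nlinarith [mul_nonneg (sq_nonneg z) (le_of_lt (neg_pos.mpr h0))]
    calc Real.exp (-z) * (Real.sqrt (1-2*z))⁻¹
        ≤ Real.exp (-z) * Real.exp ((-((2*(-z))/(1-2*z)))/2) := by
          apply mul_le_mul_of_nonneg_left h2 (Real.exp_nonneg _)
      _ = Real.exp (-z + (-((2*(-z))/(1-2*z)))/2) := by rw [← Real.exp_add]
      _ ≤ Real.exp (2*z^2) := Real.exp_le_exp.mpr h3

lemma meas_aux {ι : Type*} {g : ℝ → ℝ → ℝ} (hg : Measurable (Function.uncurry g))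
    (c₁ c₂ : ι) : Measurable (fun v : ι → ℝ => g (v c₁) (v c₂)) := by
  have : (fun v : ι → ℝ => g (v c₁) (v c₂))
      = (Function.uncurry g) ∘ (fun v => (v c₁, v c₂)) := rfl
  rw [this]
  exact hg.comp ((measurable_pi_apply c₁).prodMk (measurable_pi_apply c₂))

lemma prod_integral
    {Ω : Type} [mΩ : MeasurableSpace Ω] {μ : Measure Ω} [IsProbabilityMeasure μ]
    {N r : ℕ} (Z : Ω → Matrix (Fin N) (Fin r) ℝ)
    (hmeas : ∀ k l, Measurable fun ω => Z ω k l)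
    (hind : ProbabilityTheory.iIndepFun
        (fun (p : Fin N × Fin r) ω => Z ω p.1 p.2) μ)
    (i j : Fin r) (φ : Fin N → ℝ → ℝ → ℝ)
    (hφm : ∀ k, Measurable (Function.uncurry (φ k)))
    (hφi : ∀ k, Integrable (fun ω => φ k (Z ω k i) (Z ω k j)) μ)
    (s : Finset (Fin N)) :
    Integrable (fun ω => ∏ k ∈ s, φ k (Z ω k i) (Z ω k j)) μ ∧
    ∫ ω, ∏ k ∈ s, φ k (Z ω k i) (Z ω k j) ∂μ
      = ∏ k ∈ s, ∫ ω, φ k (Z ω k i) (Z ω k j) ∂μ := by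
  classical
  induction s using Finset.induction_on with
  | empty => simp
  | @insert k₀ s hk ih =>
    set S : Finset (Fin N × Fin r) := {(k₀, i), (k₀, j)} with hS
    set T : Finset (Fin N × Fin r) := s ×ˢ ({i, j} : Finset (Fin r)) with hT
    have hdisj : Disjoint S T := by
      rw [Finset.disjoint_left]
      intro p hp hpT
      have h1 : p.1 = k₀ := by
        simp only [hS, Finset.mem_insert, Finset.mem_singleton] at hp
        rcases hp with h | h <;> simp [h]
      have h2 : p.1 ∈ s := (Finset.mem_product.mp hpT).1
      rw [h1] at h2; exact hk h2
    have hmeas' : ∀ p : Fin N × Fin r, Measurable fun ω => Z ω p.1 p.2 :=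
      fun p => hmeas p.1 p.2
    have hbase := hind.indepFun_finset S T hdisj hmeas'
    have hmemi : ((k₀, i) : Fin N × Fin r) ∈ S := by simp [hS]
    have hmemj : ((k₀, j) : Fin N × Fin r) ∈ S := by simp [hS]
    set Ψ₁ : (S → ℝ) → ℝ := fun v => φ k₀ (v ⟨(k₀,i), hmemi⟩) (v ⟨(k₀,j), hmemj⟩) with hΨ₁def
    set Ψ₂ : (T → ℝ) → ℝ := fun v => ∏ k ∈ s.attach,
        φ k.1 (v ⟨(k.1,i), by simp [hT, k.2]⟩) (v ⟨(k.1,j), by simp [hT, k.2]⟩) with hΨ₂def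
    have hΨ₁ : Measurable Ψ₁ := meas_aux (hφm k₀) _ _
    have hΨ₂ : Measurable Ψ₂ := by
      apply Finset.measurable_prod
      intro k _
      exact meas_aux (hφm k.1) _ _
    have hIF : ProbabilityTheory.IndepFun (fun ω => φ k₀ (Z ω k₀ i) (Z ω k₀ j))
        (fun ω => ∏ k ∈ s, φ k (Z ω k i) (Z ω k j)) μ := by
      have h2 := hbase.comp hΨ₁ hΨ₂
      have e2 : (Ψ₂ ∘ fun a (x : T) => Z a (x : Fin N × Fin r).1 (x : Fin N × Fin r).2)
          = fun ω => ∏ k ∈ s, φ k (Z ω k i) (Z ω k j) := by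
        funext a
        simp only [Function.comp_apply, hΨ₂def]
        exact Finset.prod_attach s (fun k => φ k (Z a k i) (Z a k j))
      rwa [e2] at h2
    have hmf : ∀ k : Fin N, AEStronglyMeasurable (fun ω => φ k (Z ω k i) (Z ω k j)) μ := by
      intro k
      exact ((hφm k).comp ((hmeas k i).prodMk (hmeas k j))).aestronglyMeasurable
    constructor
    · simp_rw [Finset.prod_insert hk]
      exact hIF.integrable_mul (hφi k₀) ih.1
    · simp_rw [Finset.prod_insert hk]
      have := hIF.integral_mul_eq_mul_integral (hmf k₀)
        (Finset.aestronglyMeasurable_fun_prod _ (fun k _ => hmf k))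
      rw [show (fun ω => φ k₀ (Z ω k₀ i) (Z ω k₀ j) * ∏ k ∈ s, φ k (Z ω k i) (Z ω k j))
          = (fun ω => φ k₀ (Z ω k₀ i) (Z ω k₀ j)) * (fun ω => ∏ k ∈ s, φ k (Z ω k i) (Z ω k j))
          from rfl, this, ih.2]

lemma dotProduct_self_nonneg' {n : ℕ} (v : Fin n → ℝ) : 0 ≤ v ⬝ᵥ v :=
  Finset.sum_nonneg fun i _ => mul_self_nonneg _

lemma eigMaxOf_le {r : ℕ} (hr : 0 < r) {G : Matrix (Fin r) (Fin r) ℝ}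
    (hG : G.IsHermitian) {b : ℝ}
    (h : ∀ v : Fin r → ℝ, v ⬝ᵥ v = 1 → v ⬝ᵥ (G *ᵥ v) ≤ b) : eigMaxOf G ≤ b := by
  haveI : Nonempty (Fin r) := Fin.pos_iff_nonempty.mp hr
  have he : ∀ i : Fin r, (if hA : G.IsHermitian then hA.eigenvalues i else 0)
      = hG.eigenvalues i := fun i => dif_pos hG
  rw [eigMaxOf]
  simp_rw [he]
  apply ciSup_le
  intro i
  set u : Fin r → ℝ := ⇑(hG.eigenvectorBasis i) with hu
  have hnorm : ‖hG.eigenvectorBasis i‖ = 1 := (hG.eigenvectorBasis).orthonormal.1 i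
  have hsum : u ⬝ᵥ u = 1 := by
    have h1 : Real.sqrt (∑ j, u j ^ 2) = 1 := by
      rw [← hnorm, EuclideanSpace.norm_eq]
      simp only [Real.norm_eq_abs, sq_abs]
      rfl
    have h2 : (∑ j, u j ^ 2) = 1 := by
      have h3 := congrArg (fun x => x ^ 2) h1
      simpa [Real.sq_sqrt (Finset.sum_nonneg fun j (_ : j ∈ Finset.univ) => sq_nonneg (u j))]
        using h3
    rw [dotProduct]
    simpa [pow_two] using h2
  have hmul : G *ᵥ u = hG.eigenvalues i • u := hG.mulVec_eigenvectorBasis i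
  have heig : u ⬝ᵥ (G *ᵥ u) = hG.eigenvalues i := by
    rw [hmul, dotProduct_smul, smul_eq_mul, hsum, mul_one]
  rw [← heig]
  exact h u hsum

lemma key_CS2 {r : ℕ} (Y : Matrix (Fin r) (Fin r) ℝ) (w : Fin r → ℝ) :
    (Y *ᵥ w) ⬝ᵥ (Y *ᵥ w) ≤ (∑ i, ∑ j, (Y i j)^2) * (w ⬝ᵥ w) := by
  have hrow : ∀ i : Fin r, (Y *ᵥ w) i * (Y *ᵥ w) i ≤ (∑ j, (Y i j)^2) * (w ⬝ᵥ w) := by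
    intro i
    have h1 : (Y *ᵥ w) i = ∑ j, Y i j * w j := rfl
    have h2 := Finset.sum_mul_sq_le_sq_mul_sq Finset.univ (fun j => Y i j) w
    rw [h1, ← pow_two]
    calc (∑ j, Y i j * w j)^2 ≤ (∑ j, (Y i j)^2) * (∑ j, (w j)^2) := h2
      _ = (∑ j, (Y i j)^2) * (w ⬝ᵥ w) := by rw [dotProduct]; congr 1; simp_rw [pow_two]
  calc (Y *ᵥ w) ⬝ᵥ (Y *ᵥ w) = ∑ i, (Y *ᵥ w) i * (Y *ᵥ w) i := rfl
    _ ≤ ∑ i, (∑ j, (Y i j)^2) * (w ⬝ᵥ w) := Finset.sum_le_sum fun i _ => hrow i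
    _ = (∑ i, ∑ j, (Y i j)^2) * (w ⬝ᵥ w) := by rw [Finset.sum_mul]

lemma key_V {N r : ℕ} (V : Matrix (Fin N) (Fin r) ℝ)
    (hV : Vᵀ * V = (N : ℝ) • 1) (y : Fin N → ℝ) :
    (Vᵀ *ᵥ y) ⬝ᵥ (Vᵀ *ᵥ y) ≤ (N : ℝ) * (y ⬝ᵥ y) := by
  set z : Fin r → ℝ := Vᵀ *ᵥ y with hz
  have h1 : z ⬝ᵥ z = (V *ᵥ z) ⬝ᵥ y := by
    conv_lhs => rw [hz, dotProduct_mulVec, vecMul_transpose]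
  have h2 : (V *ᵥ z) ⬝ᵥ (V *ᵥ z) = (N : ℝ) * (z ⬝ᵥ z) := by
    rw [dotProduct_mulVec]
    have h3 : (V *ᵥ z) ᵥ* V = (N : ℝ) • z := by
      rw [show V = (Vᵀ)ᵀ from (transpose_transpose V).symm, vecMul_transpose,
        transpose_transpose, mulVec_mulVec, hV, smul_mulVec, one_mulVec]
    rw [h3, smul_dotProduct, smul_eq_mul]
  have hCS : ((V *ᵥ z) ⬝ᵥ y)^2 ≤ ((V *ᵥ z) ⬝ᵥ (V *ᵥ z)) * (y ⬝ᵥ y) := by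
    have hq := Finset.sum_mul_sq_le_sq_mul_sq Finset.univ (V *ᵥ z) y
    calc ((V *ᵥ z) ⬝ᵥ y)^2 = (∑ i, (V *ᵥ z) i * y i)^2 := rfl
      _ ≤ (∑ i, ((V *ᵥ z) i)^2) * (∑ i, (y i)^2) := hq
      _ = ((V *ᵥ z) ⬝ᵥ (V *ᵥ z)) * (y ⬝ᵥ y) := by
          simp [dotProduct, pow_two]
  have hzz := dotProduct_self_nonneg' z
  have hyy := dotProduct_self_nonneg' y
  rw [h2, ← h1] at hCS
  rcases eq_or_lt_of_le hzz with h0 | h0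
  · rw [← h0]; exact mul_nonneg (Nat.cast_nonneg N) hyy
  · have hCS' : (z ⬝ᵥ z) * (z ⬝ᵥ z) ≤ ((N:ℝ) * (y ⬝ᵥ y)) * (z ⬝ᵥ z) := by
      nlinarith [hCS]
    exact le_of_mul_le_mul_right hCS' h0

lemma key_w {r : ℕ} (hr : 0 < r) (A : Matrix (Fin r) (Fin r) ℝ) (w : Fin r → ℝ)
    (hAe : ∀ i j, |A i j - (if i = j then (1:ℝ) else 0)| ≤ (2*(r:ℝ))⁻¹)
    (hQ : w ⬝ᵥ (A *ᵥ w) ≤ 1) : w ⬝ᵥ w ≤ 2 := by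
  have hrpos : (0:ℝ) < r := Nat.cast_pos.mpr hr
  set D : ℝ := ∑ i, ∑ j, w i * (A i j - (if i = j then (1:ℝ) else 0)) * w j with hD
  have hsplit : w ⬝ᵥ (A *ᵥ w) = w ⬝ᵥ w + D := by
    have hterm : ∀ i : Fin r, w i * (A *ᵥ w) i
        = w i * w i + ∑ j, w i * (A i j - (if i = j then (1:ℝ) else 0)) * w j := by
      intro i
      have h1 : (A *ᵥ w) i = ∑ j, A i j * w j := rfl
      have e1 : ∑ j, w i * (A i j - (if i = j then (1:ℝ) else 0)) * w j
          = (∑ j, w i * (A i j * w j))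
            - ∑ j, w i * (if i = j then (1:ℝ) else 0) * w j := by
        rw [← Finset.sum_sub_distrib]
        apply Finset.sum_congr rfl; intros; ring
      have e2 : ∑ j, w i * (if i = j then (1:ℝ) else 0) * w j = w i * w i := by
        simp [mul_ite, ite_mul]
      rw [e1, e2, h1, Finset.mul_sum]
      ring
    calc w ⬝ᵥ (A *ᵥ w) = ∑ i, w i * (A *ᵥ w) i := rfl
      _ = ∑ i, (w i * w i + ∑ j, w i * (A i j - (if i = j then (1:ℝ) else 0)) * w j) :=
          Finset.sum_congr rfl fun i _ => hterm i
      _ = (∑ i, w i * w i) + D := by rw [Finset.sum_add_distrib, hD]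
      _ = w ⬝ᵥ w + D := rfl
  have habs : |D| ≤ (2*(r:ℝ))⁻¹ * ((∑ i, |w i|) * (∑ i, |w i|)) := by
    have step1 : |D| ≤ ∑ i, ∑ j, |w i| * (2*(r:ℝ))⁻¹ * |w j| := by
      calc |D| ≤ ∑ i, |∑ j, w i * (A i j - (if i = j then (1:ℝ) else 0)) * w j| := by
            rw [hD]; exact Finset.abs_sum_le_sum_abs _ _
        _ ≤ ∑ i, ∑ j, |w i * (A i j - (if i = j then (1:ℝ) else 0)) * w j| :=
            Finset.sum_le_sum fun i _ => Finset.abs_sum_le_sum_abs _ _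
        _ ≤ ∑ i, ∑ j, |w i| * (2*(r:ℝ))⁻¹ * |w j| := by
            apply Finset.sum_le_sum; intro i _
            apply Finset.sum_le_sum; intro j _
            rw [abs_mul, abs_mul]
            apply mul_le_mul_of_nonneg_right ?_ (abs_nonneg _)
            exact mul_le_mul_of_nonneg_left (hAe i j) (abs_nonneg _)
    have step2 : ∑ i, ∑ j, |w i| * (2*(r:ℝ))⁻¹ * |w j|
        = (2*(r:ℝ))⁻¹ * ((∑ i, |w i|) * (∑ i, |w i|)) := by
      rw [Finset.sum_mul_sum, Finset.mul_sum]
      apply Finset.sum_congr rfl; intro i _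
      rw [Finset.mul_sum]
      apply Finset.sum_congr rfl; intro j _
      ring
    linarith
  have hsq : (∑ i, |w i|) * (∑ i, |w i|) ≤ (r:ℝ) * (w ⬝ᵥ w) := by
    have h8 := sq_sum_le_card_mul_sum_sq (s := (Finset.univ : Finset (Fin r)))
      (f := fun i => |w i|)
    simp only [Finset.card_univ, Fintype.card_fin, sq_abs] at h8
    calc (∑ i, |w i|) * (∑ i, |w i|) = (∑ i, |w i|)^2 := (pow_two _).symm
      _ ≤ (r:ℝ) * ∑ i, w i ^ 2 := h8
      _ = (r:ℝ) * (w ⬝ᵥ w) := by rw [dotProduct]; congr 1; simp_rw [pow_two]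
  have h5 : |D| ≤ (w ⬝ᵥ w)/2 := by
    have h6 : (2*(r:ℝ))⁻¹ * ((∑ i, |w i|) * (∑ i, |w i|))
        ≤ (2*(r:ℝ))⁻¹ * ((r:ℝ) * (w ⬝ᵥ w)) := by
      apply mul_le_mul_of_nonneg_left hsq (by positivity)
    have h7 : (2*(r:ℝ))⁻¹ * ((r:ℝ) * (w ⬝ᵥ w)) = (w ⬝ᵥ w)/2 := by
      field_simp
    linarith
  have h9 := abs_le.mp h5
  rw [hsplit] at hQ
  linarith

lemma det_bound {N r : ℕ} (hr : 0 < r) (hN : 0 < N)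
    (Zm V : Matrix (Fin N) (Fin r) ℝ) (hV : Vᵀ * V = (N:ℝ) • 1)
    (t : ℝ) (ht : 0 < t)
    (hgood : (1 ≤ t) ∨
      ((∀ i j, |((N:ℝ)⁻¹ • (Zmᵀ * Zm)) i j - (if i = j then (1:ℝ) else 0)| ≤ (2*(r:ℝ))⁻¹) ∧
       (∀ i j, |(Vᵀ * Zm) i j| ≤ (N:ℝ) * Real.sqrt (t/2) / r)))
    (M : Matrix (Fin r) (Fin r) ℝ)
    (hMdef : M = (N:ℝ)⁻¹ • (Vᵀ * (Zm * (psdSqrt ((N:ℝ)⁻¹ • (Zmᵀ * Zm)))⁻¹))) :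
    eigMaxOf (Mᵀ * M) ≤ (r:ℝ)/N + t := by
  have hNpos : (0:ℝ) < N := Nat.cast_pos.mpr hN
  have hrpos : (0:ℝ) < r := Nat.cast_pos.mpr hr
  set A : Matrix (Fin r) (Fin r) ℝ := (N:ℝ)⁻¹ • (Zmᵀ * Zm) with hAdef
  have hA : A.PosSemidef := by
    have base : (Zmᵀ * Zm).PosSemidef := by
      rw [← conjTranspose_eq_transpose_of_trivial]
      exact posSemidef_conjTranspose_mul_self Zm
    exact base.smul (by positivity)
  set S : Matrix (Fin r) (Fin r) ℝ := psdSqrt A with hSdef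
  have hSeq : S = (hA.1.eigenvectorUnitary : Matrix (Fin r) (Fin r) ℝ) *
      diagonal (Real.sqrt ∘ hA.1.eigenvalues) *
      star (hA.1.eigenvectorUnitary : Matrix (Fin r) (Fin r) ℝ) := by
    rw [hSdef, psdSqrt, dif_pos hA]
  have hSpsd : S.PosSemidef := by
    rw [hSeq]
    exact (PosSemidef.diagonal (fun i => Real.sqrt_nonneg _)).mul_mul_conjTranspose_same _
  have hST : Sᵀ = S := by
    rw [← conjTranspose_eq_transpose_of_trivial]
    exact hSpsd.isHermitian.eq
  have hSS : S * S = A := by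
    rw [hSeq]
    set U : Matrix (Fin r) (Fin r) ℝ := (hA.1.eigenvectorUnitary : Matrix (Fin r) (Fin r) ℝ)
      with hU
    have hUU : star U * U = 1 := Unitary.coe_star_mul_self _
    have hD : diagonal (Real.sqrt ∘ hA.1.eigenvalues) * diagonal (Real.sqrt ∘ hA.1.eigenvalues)
        = diagonal hA.1.eigenvalues := by
      rw [diagonal_mul_diagonal]; congr 1; funext i
      exact Real.mul_self_sqrt (hA.eigenvalues_nonneg i)
    calc U * diagonal (Real.sqrt ∘ hA.1.eigenvalues) * star U *
          (U * diagonal (Real.sqrt ∘ hA.1.eigenvalues) * star U)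
        = U * (diagonal (Real.sqrt ∘ hA.1.eigenvalues) *
            diagonal (Real.sqrt ∘ hA.1.eigenvalues)) * star U := by
          simp only [Matrix.mul_assoc]
          rw [← Matrix.mul_assoc (star U) U, hUU, Matrix.one_mul]
      _ = A := by
          rw [hD]
          conv_rhs => rw [hA.1.spectral_theorem]
          rw [Unitary.conjStarAlgAut_apply]
          simp [hU]
  have hGH : (Mᵀ * M).IsHermitian := by
    rw [← conjTranspose_eq_transpose_of_trivial]
    exact isHermitian_conjTranspose_mul_self M
  apply eigMaxOf_le hr hGH
  intro v hv
  have hQF : v ⬝ᵥ ((Mᵀ * M) *ᵥ v) = (M *ᵥ v) ⬝ᵥ (M *ᵥ v) := by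
    rw [← mulVec_mulVec, dotProduct_mulVec, vecMul_transpose]
  rw [hQF]
  by_cases hU : IsUnit S.det
  · set w : Fin r → ℝ := S⁻¹ *ᵥ v with hw
    have hSw : S *ᵥ w = v := by
      rw [hw, mulVec_mulVec, Matrix.mul_nonsing_inv S hU, one_mulVec]
    have hwAw : w ⬝ᵥ (A *ᵥ w) = 1 := by
      have h1 : A *ᵥ w = S *ᵥ v := by rw [← hSS, ← mulVec_mulVec, hSw]
      rw [h1, dotProduct_mulVec]
      have h2 : w ᵥ* S = v := by rw [← hST, vecMul_transpose, hSw]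
      rw [h2, hv]
    have hZw : (Zm *ᵥ w) ⬝ᵥ (Zm *ᵥ w) = (N:ℝ) := by
      have h1 : w ⬝ᵥ (A *ᵥ w) = (N:ℝ)⁻¹ * ((Zm *ᵥ w) ⬝ᵥ (Zm *ᵥ w)) := by
        rw [hAdef, smul_mulVec, dotProduct_smul, smul_eq_mul, ← mulVec_mulVec,
          dotProduct_mulVec]
        congr 2
        rw [show Zmᵀ = Zmᵀ from rfl, ← transpose_transpose Zm, vecMul_transpose,
          transpose_transpose]
      rw [h1] at hwAw
      field_simp at hwAw
      linarith [hwAw]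
    have hMv : M *ᵥ v = (N:ℝ)⁻¹ • ((Vᵀ * Zm) *ᵥ w) := by
      rw [hMdef, smul_mulVec]
      congr 1
      rw [hw, mulVec_mulVec, Matrix.mul_assoc]
    have hMvMv : (M *ᵥ v) ⬝ᵥ (M *ᵥ v)
        = (N:ℝ)⁻¹ * ((N:ℝ)⁻¹ * (((Vᵀ * Zm) *ᵥ w) ⬝ᵥ ((Vᵀ * Zm) *ᵥ w))) := by
      rw [hMv, smul_dotProduct, dotProduct_smul, smul_eq_mul, smul_eq_mul]
    rw [hMvMv]
    rcases hgood with h1t | ⟨hgA, hgY⟩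
    · -- deterministic bound ≤ 1 ≤ t
      have hy : ((Vᵀ * Zm) *ᵥ w) = Vᵀ *ᵥ (Zm *ᵥ w) := (mulVec_mulVec w Vᵀ Zm).symm
      have hb := key_V V hV (Zm *ᵥ w)
      rw [hZw] at hb
      have : (N:ℝ)⁻¹ * ((N:ℝ)⁻¹ * (((Vᵀ * Zm) *ᵥ w) ⬝ᵥ ((Vᵀ * Zm) *ᵥ w))) ≤ 1 := by
        rw [hy]
        calc (N:ℝ)⁻¹ * ((N:ℝ)⁻¹ * ((Vᵀ *ᵥ (Zm *ᵥ w)) ⬝ᵥ (Vᵀ *ᵥ (Zm *ᵥ w))))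
            ≤ (N:ℝ)⁻¹ * ((N:ℝ)⁻¹ * ((N:ℝ) * (N:ℝ))) := by
              apply mul_le_mul_of_nonneg_left ?_ (by positivity)
              exact mul_le_mul_of_nonneg_left hb (by positivity)
          _ = 1 := by field_simp
      have : (N:ℝ)⁻¹ * ((N:ℝ)⁻¹ * (((Vᵀ * Zm) *ᵥ w) ⬝ᵥ ((Vᵀ * Zm) *ᵥ w))) ≤ t :=
        le_trans this h1t
      have hrN : (0:ℝ) ≤ (r:ℝ)/N := by positivity
      linarith
    · -- good event bound ≤ t
      have hww : w ⬝ᵥ w ≤ 2 := key_w hr A w hgA (le_of_eq hwAw)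
      have hYb : (∑ i, ∑ j, ((Vᵀ * Zm) i j)^2) ≤ (r:ℝ)^2 * ((N:ℝ) * Real.sqrt (t/2) / r)^2 := by
        have hterm : ∀ i j : Fin r, ((Vᵀ * Zm) i j)^2 ≤ ((N:ℝ) * Real.sqrt (t/2) / r)^2 := by
          intro i j
          have := hgY i j
          exact sq_le_sq' (by linarith [abs_le.mp this]) (by linarith [abs_le.mp this])
        calc (∑ i, ∑ j, ((Vᵀ * Zm) i j)^2)
            ≤ ∑ i : Fin r, ∑ j : Fin r, ((N:ℝ) * Real.sqrt (t/2) / r)^2 :=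
              Finset.sum_le_sum fun i _ => Finset.sum_le_sum fun j _ => hterm i j
          _ = (r:ℝ)^2 * ((N:ℝ) * Real.sqrt (t/2) / r)^2 := by
              simp [Finset.sum_const, Finset.card_univ]
              ring
      have hu2 : ((N:ℝ) * Real.sqrt (t/2) / r)^2 = (N:ℝ)^2 * (t/2) / (r:ℝ)^2 := by
        rw [div_pow, mul_pow, Real.sq_sqrt (by linarith : (0:ℝ) ≤ t/2)]
      have hCS := key_CS2 (Vᵀ * Zm) w
      have hfinal : (((Vᵀ * Zm) *ᵥ w) ⬝ᵥ ((Vᵀ * Zm) *ᵥ w)) ≤ (N:ℝ)^2 * t := by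
        calc (((Vᵀ * Zm) *ᵥ w) ⬝ᵥ ((Vᵀ * Zm) *ᵥ w))
            ≤ (∑ i, ∑ j, ((Vᵀ * Zm) i j)^2) * (w ⬝ᵥ w) := hCS
          _ ≤ ((r:ℝ)^2 * ((N:ℝ)^2 * (t/2) / (r:ℝ)^2)) * 2 := by
              apply mul_le_mul (by rw [← hu2]; exact hYb) hww (dotProduct_self_nonneg' w)
              positivity
          _ = (N:ℝ)^2 * t := by field_simp
      have hrN : (0:ℝ) ≤ (r:ℝ)/N := by positivity
      have : (N:ℝ)⁻¹ * ((N:ℝ)⁻¹ * (((Vᵀ * Zm) *ᵥ w) ⬝ᵥ ((Vᵀ * Zm) *ᵥ w))) ≤ t := by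
        calc (N:ℝ)⁻¹ * ((N:ℝ)⁻¹ * (((Vᵀ * Zm) *ᵥ w) ⬝ᵥ ((Vᵀ * Zm) *ᵥ w)))
            ≤ (N:ℝ)⁻¹ * ((N:ℝ)⁻¹ * ((N:ℝ)^2 * t)) := by
              apply mul_le_mul_of_nonneg_left ?_ (by positivity)
              exact mul_le_mul_of_nonneg_left hfinal (by positivity)
          _ = t := by field_simp
      linarith
  · -- S not invertible: S⁻¹ = 0
    have hSinv : S⁻¹ = 0 := Matrix.nonsing_inv_apply_not_isUnit S hU
    have hM0 : M = 0 := by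
      rw [hMdef, hSinv, Matrix.mul_zero, Matrix.mul_zero, smul_zero]
    rw [hM0]
    have : ((0 : Matrix (Fin r) (Fin r) ℝ) *ᵥ v) ⬝ᵥ ((0 : Matrix (Fin r) (Fin r) ℝ) *ᵥ v) = 0 := by
      rw [Matrix.zero_mulVec, dotProduct_zero]
    rw [this]
    positivity

lemma bound_offdiag {c : ℝ} (hc : |c| ≤ 1/8) :
    (Real.sqrt (1 - c^2))⁻¹ ≤ Real.exp (2*c^2) := by
  have habs := abs_le.mp hc
  have hc2 : c^2 ≤ 1/4 := by nlinarith
  have h1 : ((1:ℝ) - c^2)⁻¹ ≤ Real.exp (c^2 + (c^2)^2) :=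
    inv_one_sub_le_exp (sq_nonneg c) hc2
  have h2 : (Real.sqrt (1 - c^2))⁻¹ ≤ Real.exp ((c^2 + (c^2)^2)/2) :=
    sqrt_inv_le_exp (by nlinarith) h1
  calc (Real.sqrt (1 - c^2))⁻¹ ≤ Real.exp ((c^2 + (c^2)^2)/2) := h2
    _ ≤ Real.exp (2*c^2) := Real.exp_le_exp.mpr (by nlinarith)

lemma transfer1 {Ω : Type} [MeasurableSpace Ω] {μ : Measure Ω} {g : Ω → ℝ}
    (hg : Measurable g) (hmap : Measure.map g μ = gaussianReal 0 1)
    {f : ℝ → ℝ} (hf : Measurable f) (hfi : Integrable f (gaussianReal 0 1)) :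
    Integrable (fun ω => f (g ω)) μ ∧
    ∫ ω, f (g ω) ∂μ = ∫ x, f x ∂(gaussianReal 0 1) := by
  have hfsm : AEStronglyMeasurable f (Measure.map g μ) := by
    rw [hmap]; exact hf.aestronglyMeasurable
  constructor
  · have h1 : Integrable f (Measure.map g μ) := by rw [hmap]; exact hfi
    exact (integrable_map_measure hfsm hg.aemeasurable).mp h1
  · rw [← hmap, integral_map hg.aemeasurable hfsm]

lemma transfer2 {Ω : Type} [MeasurableSpace Ω] {μ : Measure Ω} [IsProbabilityMeasure μ]
    {g₁ g₂ : Ω → ℝ} (hg₁ : Measurable g₁) (hg₂ : Measurable g₂)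
    (hindep : ProbabilityTheory.IndepFun g₁ g₂ μ)
    (hmap₁ : Measure.map g₁ μ = gaussianReal 0 1)
    (hmap₂ : Measure.map g₂ μ = gaussianReal 0 1)
    {F : ℝ × ℝ → ℝ} (hF : Measurable F)
    (hFi : Integrable F ((gaussianReal 0 1).prod (gaussianReal 0 1))) :
    Integrable (fun ω => F (g₁ ω, g₂ ω)) μ ∧
    ∫ ω, F (g₁ ω, g₂ ω) ∂μ = ∫ p, F p ∂((gaussianReal 0 1).prod (gaussianReal 0 1)) := by
  have hlaw : Measure.map (fun ω => (g₁ ω, g₂ ω)) μ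
      = (gaussianReal 0 1).prod (gaussianReal 0 1) := by
    rw [(indepFun_iff_map_prod_eq_prod_map_map hg₁.aemeasurable hg₂.aemeasurable).mp hindep,
      hmap₁, hmap₂]
  have hpm : Measurable fun ω => (g₁ ω, g₂ ω) := hg₁.prodMk hg₂
  have hFsm : AEStronglyMeasurable F (Measure.map (fun ω => (g₁ ω, g₂ ω)) μ) := by
    rw [hlaw]; exact hF.aestronglyMeasurable
  constructor
  · have h1 : Integrable F (Measure.map (fun ω => (g₁ ω, g₂ ω)) μ) := by
      rw [hlaw]; exact hFi
    exact (integrable_map_measure hFsm hpm.aemeasurable).mp h1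
  · rw [← hlaw, integral_map hpm.aemeasurable hFsm]

lemma lin_eval (c : ℝ) :
    Integrable (fun x => Real.exp (c * x)) (gaussianReal 0 1) ∧
    ∫ x, Real.exp (c * x) ∂(gaussianReal 0 1) = Real.exp (c^2/2) := by
  have h := gauss_eval c 0 (by norm_num)
  have he : (fun x => Real.exp (c*x + 0*x^2)) = fun x => Real.exp (c * x) := by
    funext x; norm_num
  rw [he] at h
  refine ⟨h.1, ?_⟩
  rw [h.2]
  norm_num

lemma diag_eval (l : ℝ) (hl : |l| ≤ 1/8) :
    Integrable (fun x => Real.exp (l * (x * x - 1))) (gaussianReal 0 1) ∧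
    ∫ x, Real.exp (l * (x * x - 1)) ∂(gaussianReal 0 1) ≤ Real.exp (2 * l^2) := by
  have habs := abs_le.mp hl
  have h := gauss_eval 0 l (by linarith)
  have he : (fun x => Real.exp (l * (x * x - 1)))
      = fun x => Real.exp (-l) * Real.exp (0*x + l*x^2) := by
    funext x; rw [← Real.exp_add]; ring_nf
  constructor
  · rw [he]; exact h.1.const_mul _
  · rw [he, integral_const_mul, h.2]
    have : Real.exp (0^2/(2*(1-2*l))) / Real.sqrt (1-2*l) = 1 / Real.sqrt (1-2*l) := by
      norm_num
    rw [this]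
    calc Real.exp (-l) * (1 / Real.sqrt (1-2*l)) = Real.exp (-l) / Real.sqrt (1-2*l) := by
          ring
      _ ≤ Real.exp (2 * l^2) := bound_diag hl

lemma offdiag_eval (c : ℝ) (hc : |c| ≤ 1/8) :
    Integrable (fun p : ℝ × ℝ => Real.exp (c * (p.1 * p.2)))
      ((gaussianReal 0 1).prod (gaussianReal 0 1)) ∧
    ∫ p, Real.exp (c * (p.1 * p.2)) ∂((gaussianReal 0 1).prod (gaussianReal 0 1))
      ≤ Real.exp (2 * c^2) := by
  have habs := abs_le.mp hc
  have hc2 : c^2/2 < 1/2 := by nlinarith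
  have hsm : AEStronglyMeasurable (fun p : ℝ × ℝ => Real.exp (c * (p.1 * p.2)))
      ((gaussianReal 0 1).prod (gaussianReal 0 1)) :=
    (Continuous.rexp (continuous_const.mul (continuous_fst.mul continuous_snd))).aestronglyMeasurable
  have key : ∀ x : ℝ, (fun y => Real.exp (c*(x*y))) = fun y => Real.exp ((c*x)*y + 0*y^2) := by
    intro x; funext y; congr 1; ring
  have hslice : ∀ x : ℝ, Integrable (fun y => Real.exp (c * (x * y))) (gaussianReal 0 1) := by
    intro x; rw [key x]; exact (gauss_eval (c*x) 0 (by norm_num)).1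
  have hslice_val : ∀ x : ℝ, ∫ y, Real.exp (c * (x * y)) ∂(gaussianReal 0 1)
      = Real.exp (c^2/2 * x^2) := by
    intro x
    rw [key x, (gauss_eval (c*x) 0 (by norm_num)).2]
    norm_num
    congr 1; ring
  have houter : Integrable (fun x => Real.exp (c^2/2 * x^2)) (gaussianReal 0 1) := by
    have h := (gauss_eval 0 (c^2/2) hc2).1
    have he : (fun x => Real.exp (0*x + c^2/2*x^2)) = fun x => Real.exp (c^2/2 * x^2) := by
      funext x; congr 1; ring
    rwa [he] at h
  have houter_val : ∫ x, Real.exp (c^2/2 * x^2) ∂(gaussianReal 0 1)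
      = (Real.sqrt (1 - c^2))⁻¹ := by
    have he : (fun x => Real.exp (0*x + c^2/2*x^2)) = fun x => Real.exp (c^2/2 * x^2) := by
      funext x; congr 1; ring
    have h := (gauss_eval 0 (c^2/2) hc2).2
    rw [he] at h
    rw [h]
    have h12 : 1 - 2*(c^2/2) = 1 - c^2 := by ring
    rw [h12]
    norm_num
  have hint : Integrable (fun p : ℝ × ℝ => Real.exp (c * (p.1 * p.2)))
      ((gaussianReal 0 1).prod (gaussianReal 0 1)) := by
    rw [integrable_prod_iff hsm]
    constructor
    · exact ae_of_all _ fun x => hslice x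
    · have he : (fun x => ∫ y, ‖Real.exp (c * (x * y))‖ ∂(gaussianReal 0 1))
          = fun x => Real.exp (c^2/2 * x^2) := by
        funext x
        rw [← hslice_val x]
        congr 1; funext y; rw [Real.norm_eq_abs, Real.abs_exp]
      rw [he]
      exact houter
  refine ⟨hint, ?_⟩
  rw [integral_prod _ hint]
  have he2 : ∫ x, (∫ y, Real.exp (c * (x * y)) ∂(gaussianReal 0 1)) ∂(gaussianReal 0 1)
      = ∫ x, Real.exp (c^2/2 * x^2) ∂(gaussianReal 0 1) := by
    apply integral_congr_ae (ae_of_all _ fun x => hslice_val x)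
  rw [he2, houter_val]
  exact bound_offdiag hc

lemma chernoff_bound
    {Ω : Type} [mΩ : MeasurableSpace Ω] {μ : Measure Ω} [IsProbabilityMeasure μ]
    {N r : ℕ} (Z : Ω → Matrix (Fin N) (Fin r) ℝ)
    (hmeas : ∀ k l, Measurable fun ω => Z ω k l)
    (hind : ProbabilityTheory.iIndepFun
        (fun (p : Fin N × Fin r) ω => Z ω p.1 p.2) μ)
    (i j : Fin r) (ψ : Fin N → ℝ → ℝ → ℝ) (lam : ℝ) (hlam : 0 < lam)
    (hψm : ∀ k, Measurable (Function.uncurry (ψ k)))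
    (hInt : ∀ k, Integrable (fun ω => Real.exp (lam * ψ k (Z ω k i) (Z ω k j))) μ)
    (P : ℝ)
    (hP : ∏ k : Fin N, ∫ ω, Real.exp (lam * ψ k (Z ω k i) (Z ω k j)) ∂μ ≤ P)
    (ε : ℝ) :
    μ {ω | ε ≤ ∑ k : Fin N, ψ k (Z ω k i) (Z ω k j)}
      ≤ ENNReal.ofReal (Real.exp (-lam * ε) * P) := by
  set φ : Fin N → ℝ → ℝ → ℝ := fun k x y => Real.exp (lam * ψ k x y) with hφ
  have hφm : ∀ k, Measurable (Function.uncurry (φ k)) := by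
    intro k
    have : Function.uncurry (φ k) = fun p => Real.exp (lam * Function.uncurry (ψ k) p) := rfl
    rw [this]
    exact (Real.measurable_exp.comp ((hψm k).const_mul lam))
  have hprod := prod_integral Z hmeas hind i j φ hφm (fun k => hInt k) Finset.univ
  set T : Ω → ℝ := fun ω => ∑ k : Fin N, ψ k (Z ω k i) (Z ω k j) with hT
  have hexp : (fun ω => Real.exp (lam * T ω))
      = fun ω => ∏ k : Fin N, φ k (Z ω k i) (Z ω k j) := by
    funext ω
    rw [hT, hφ, Finset.mul_sum, Real.exp_sum]
  have hTint : Integrable (fun ω => Real.exp (lam * T ω)) μ := by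
    rw [hexp]; exact hprod.1
  have hmgf : mgf T μ lam = ∏ k : Fin N, ∫ ω, φ k (Z ω k i) (Z ω k j) ∂μ := by
    rw [mgf, ← hprod.2]
    have : (fun ω => Real.exp (lam * T ω)) = fun ω => ∏ k : Fin N, φ k (Z ω k i) (Z ω k j) :=
      hexp
    exact congrArg (integral μ) this
  have hch := measure_ge_le_exp_mul_mgf (X := T) (μ := μ) ε hlam.le hTint
  rw [hmgf] at hch
  have hbound : Real.exp (-lam * ε) * (∏ k : Fin N, ∫ ω, φ k (Z ω k i) (Z ω k j) ∂μ)
      ≤ Real.exp (-lam * ε) * P :=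
    mul_le_mul_of_nonneg_left hP (Real.exp_nonneg _)
  calc μ {ω | ε ≤ T ω}
      = ENNReal.ofReal ((μ {ω | ε ≤ T ω}).toReal) :=
        (ENNReal.ofReal_toReal (measure_ne_top μ _)).symm
    _ ≤ ENNReal.ofReal (Real.exp (-lam * ε) * P) :=
        ENNReal.ofReal_le_ofReal (le_trans hch hbound)

lemma EQ_tail
    {Ω : Type} [mΩ : MeasurableSpace Ω] {μ : Measure Ω} [IsProbabilityMeasure μ]
    {N r : ℕ} (hr : 0 < r)
    (Z : Ω → Matrix (Fin N) (Fin r) ℝ)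
    (hmeas : ∀ k l, Measurable fun ω => Z ω k l)
    (hmap : ∀ k l, Measure.map (fun ω => Z ω k l) μ = gaussianReal 0 1)
    (hind : ProbabilityTheory.iIndepFun
        (fun (p : Fin N × Fin r) ω => Z ω p.1 p.2) μ)
    (i j : Fin r) (σ : ℝ) (hσ : σ = 1 ∨ σ = -1) :
    μ {ω | (N:ℝ)/(2*r) ≤ ∑ k : Fin N, σ * (Z ω k i * Z ω k j - (if i = j then 1 else 0))}
      ≤ ENNReal.ofReal (Real.exp (-(N:ℝ)/(32*(r:ℝ)^2))) := by
  have hrpos : (0:ℝ) < r := Nat.cast_pos.mpr hr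
  have hrne : (r:ℝ) ≠ 0 := ne_of_gt hrpos
  have hr1 : (1:ℝ) ≤ r := by exact_mod_cast hr
  set lam : ℝ := (8*(r:ℝ))⁻¹ with hlamdef
  have hlampos : 0 < lam := by rw [hlamdef]; positivity
  have hlam8 : lam ≤ 1/8 := by
    rw [hlamdef]
    rw [show (1:ℝ)/8 = (8:ℝ)⁻¹ by norm_num]
    apply inv_anti₀ (by norm_num)
    nlinarith
  have hσ2 : σ^2 = 1 := by rcases hσ with h|h <;> rw [h] <;> norm_num
  have hσabs : |σ| = 1 := by rcases hσ with h|h <;> rw [h] <;> norm_num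
  have hl : |lam * σ| ≤ 1/8 := by
    rw [abs_mul, hσabs, mul_one, abs_of_pos hlampos]; exact hlam8
  set ψ : Fin N → ℝ → ℝ → ℝ :=
    fun k x y => σ * (x * y - (if i = j then (1:ℝ) else 0)) with hψ
  have hψm : ∀ k, Measurable (Function.uncurry (ψ k)) := by
    intro k
    have : Function.uncurry (ψ k)
        = fun p : ℝ × ℝ => σ * (p.1 * p.2 - (if i = j then (1:ℝ) else 0)) := rfl
    rw [this]
    exact ((measurable_fst.mul measurable_snd).sub measurable_const).const_mul σ
  have hrow : ∀ k : Fin N,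
      Integrable (fun ω => Real.exp (lam * ψ k (Z ω k i) (Z ω k j))) μ ∧
      ∫ ω, Real.exp (lam * ψ k (Z ω k i) (Z ω k j)) ∂μ ≤ Real.exp (2*lam^2) := by
    intro k
    have hll : (lam*σ)^2 = lam^2 := by rw [mul_pow, hσ2, mul_one]
    by_cases hij : i = j
    · subst hij
      have harg : (fun ω => Real.exp (lam * ψ k (Z ω k i) (Z ω k i)))
          = fun ω => Real.exp ((lam*σ) * (Z ω k i * Z ω k i - 1)) := by
        funext ω; rw [hψ]; simp only [eq_self_iff_true, if_true]; congr 1; ring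
      have hf : Measurable fun x : ℝ => Real.exp ((lam*σ) * (x * x - 1)) :=
        Real.measurable_exp.comp (((measurable_id.mul measurable_id).sub
          measurable_const).const_mul _)
      have htr := transfer1 (hmeas k i) (hmap k i) hf (diag_eval (lam*σ) hl).1
      constructor
      · rw [harg]; exact htr.1
      · rw [harg, htr.2]
        calc ∫ x, Real.exp ((lam*σ) * (x * x - 1)) ∂(gaussianReal 0 1)
            ≤ Real.exp (2*(lam*σ)^2) := (diag_eval (lam*σ) hl).2
          _ = Real.exp (2*lam^2) := by rw [hll]
    · have harg : (fun ω => Real.exp (lam * ψ k (Z ω k i) (Z ω k j)))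
          = fun ω => Real.exp ((lam*σ) * (Z ω k i * Z ω k j)) := by
        funext ω; rw [hψ]; simp only [if_neg hij]; congr 1; ring
      have hF : Measurable fun p : ℝ × ℝ => Real.exp ((lam*σ) * (p.1 * p.2)) :=
        Real.measurable_exp.comp ((measurable_fst.mul measurable_snd).const_mul _)
      have hne : ((k, i) : Fin N × Fin r) ≠ (k, j) := by
        simp [Prod.ext_iff, hij]
      have hindep : ProbabilityTheory.IndepFun (fun ω => Z ω k i) (fun ω => Z ω k j) μ :=
        hind.indepFun hne
      have htr := transfer2 (hmeas k i) (hmeas k j) hindep (hmap k i) (hmap k j) hF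
        (offdiag_eval (lam*σ) hl).1
      constructor
      · rw [harg]; exact htr.1
      · rw [harg, htr.2]
        calc ∫ p, Real.exp ((lam*σ) * (p.1 * p.2)) ∂((gaussianReal 0 1).prod (gaussianReal 0 1))
            ≤ Real.exp (2*(lam*σ)^2) := (offdiag_eval (lam*σ) hl).2
          _ = Real.exp (2*lam^2) := by rw [hll]
  have hP : ∏ k : Fin N, ∫ ω, Real.exp (lam * ψ k (Z ω k i) (Z ω k j)) ∂μ
      ≤ Real.exp (2*lam^2)^N := by
    calc ∏ k : Fin N, ∫ ω, Real.exp (lam * ψ k (Z ω k i) (Z ω k j)) ∂μ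
        ≤ ∏ _k : Fin N, Real.exp (2*lam^2) :=
          Finset.prod_le_prod (fun k _ => integral_nonneg fun ω => Real.exp_nonneg _)
            (fun k _ => (hrow k).2)
      _ = Real.exp (2*lam^2)^N := by
          rw [Finset.prod_const, Finset.card_univ, Fintype.card_fin]
  have hch := chernoff_bound Z hmeas hind i j ψ lam hlampos hψm (fun k => (hrow k).1)
    (Real.exp (2*lam^2)^N) hP ((N:ℝ)/(2*r))
  have hval : Real.exp (-lam * ((N:ℝ)/(2*r))) * Real.exp (2*lam^2)^N
      = Real.exp (-(N:ℝ)/(32*(r:ℝ)^2)) := by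
    rw [← Real.exp_nat_mul, ← Real.exp_add]
    congr 1
    rw [hlamdef]
    field_simp
    ring
  rw [hval] at hch
  exact hch

lemma EL_tail
    {Ω : Type} [mΩ : MeasurableSpace Ω] {μ : Measure Ω} [IsProbabilityMeasure μ]
    {N r : ℕ} (hr : 0 < r)
    (Z : Ω → Matrix (Fin N) (Fin r) ℝ)
    (hmeas : ∀ k l, Measurable fun ω => Z ω k l)
    (hmap : ∀ k l, Measure.map (fun ω => Z ω k l) μ = gaussianReal 0 1)
    (hind : ProbabilityTheory.iIndepFun
        (fun (p : Fin N × Fin r) ω => Z ω p.1 p.2) μ)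
    (j : Fin r) (a : Fin N → ℝ) (ha : ∑ k : Fin N, (a k)^2 = (N:ℝ))
    (σ : ℝ) (hσ : σ = 1 ∨ σ = -1) (t : ℝ) (ht : 0 < t) :
    μ {ω | (N:ℝ) * Real.sqrt (t/2) / r ≤ ∑ k : Fin N, σ * (a k * Z ω k j)}
      ≤ ENNReal.ofReal (Real.exp (-(N:ℝ)*t/(4*(r:ℝ)^2))) := by
  have hrpos : (0:ℝ) < r := Nat.cast_pos.mpr hr
  have hrne : (r:ℝ) ≠ 0 := ne_of_gt hrpos
  have hσ2 : σ^2 = 1 := by rcases hσ with h|h <;> rw [h] <;> norm_num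
  set lam : ℝ := Real.sqrt (t/2) / r with hlamdef
  have hsq : Real.sqrt (t/2) > 0 := Real.sqrt_pos.mpr (by linarith)
  have hlampos : 0 < lam := by rw [hlamdef]; positivity
  set ψ : Fin N → ℝ → ℝ → ℝ := fun k x y => σ * (a k * y) with hψ
  have hψm : ∀ k, Measurable (Function.uncurry (ψ k)) := by
    intro k
    have : Function.uncurry (ψ k) = fun p : ℝ × ℝ => σ * (a k * p.2) := rfl
    rw [this]
    exact (measurable_snd.const_mul _).const_mul σ
  have hrow : ∀ k : Fin N,
      Integrable (fun ω => Real.exp (lam * ψ k (Z ω k j) (Z ω k j))) μ ∧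
      ∫ ω, Real.exp (lam * ψ k (Z ω k j) (Z ω k j)) ∂μ
        = Real.exp ((lam*σ*a k)^2/2) := by
    intro k
    have harg : (fun ω => Real.exp (lam * ψ k (Z ω k j) (Z ω k j)))
        = fun ω => Real.exp ((lam*σ*a k) * Z ω k j) := by
      funext ω; rw [hψ]; congr 1; ring
    have hf : Measurable fun x : ℝ => Real.exp ((lam*σ*a k) * x) :=
      Real.measurable_exp.comp (measurable_id.const_mul _)
    have htr := transfer1 (hmeas k j) (hmap k j) hf (lin_eval (lam*σ*a k)).1
    constructor
    · rw [harg]; exact htr.1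
    · rw [harg, htr.2, (lin_eval (lam*σ*a k)).2]
  have hP : ∏ k : Fin N, ∫ ω, Real.exp (lam * ψ k (Z ω k j) (Z ω k j)) ∂μ
      ≤ Real.exp (lam^2 * N / 2) := by
    have h1 : ∏ k : Fin N, ∫ ω, Real.exp (lam * ψ k (Z ω k j) (Z ω k j)) ∂μ
        = ∏ k : Fin N, Real.exp ((lam*σ*a k)^2/2) :=
      Finset.prod_congr rfl fun k _ => (hrow k).2
    have h2 : ∏ k : Fin N, Real.exp ((lam*σ*a k)^2/2)
        = Real.exp (∑ k : Fin N, (lam*σ*a k)^2/2) := (Real.exp_sum _ _).symm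
    have h3 : (∑ k : Fin N, (lam*σ*a k)^2/2) = lam^2 * N / 2 := by
      have he : ∀ k : Fin N, (lam*σ*a k)^2/2 = (lam^2/2) * (a k)^2 := by
        intro k; rw [mul_pow, mul_pow, hσ2]; ring
      rw [Finset.sum_congr rfl fun k _ => he k, ← Finset.mul_sum, ha]
      ring
    rw [h1, h2, h3]
  have hch := chernoff_bound Z hmeas hind j j ψ lam hlampos hψm (fun k => (hrow k).1)
    (Real.exp (lam^2 * N / 2)) hP ((N:ℝ) * Real.sqrt (t/2) / r)
  have hε : (N:ℝ) * Real.sqrt (t/2) / r = (N:ℝ) * lam := by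
    rw [hlamdef]; ring
  have hlam2 : lam^2 = (t/2)/(r:ℝ)^2 := by
    rw [hlamdef, div_pow, Real.sq_sqrt (by linarith : (0:ℝ) ≤ t/2)]
  have hval : Real.exp (-lam * ((N:ℝ) * Real.sqrt (t/2) / r)) * Real.exp (lam^2 * N / 2)
      = Real.exp (-(N:ℝ)*t/(4*(r:ℝ)^2)) := by
    rw [hε, ← Real.exp_add]
    congr 1
    have h4 : -lam * ((N:ℝ) * lam) + lam^2 * N / 2 = -(N:ℝ) * lam^2 / 2 := by ring
    rw [h4, hlam2]
    field_simp
    ring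
  rw [hval] at hch
  exact hch

/-- **Upper tail of the largest eigenvalue of the Gram matrix of overlaps at
random (Haar) initialization**: with `Z` an `N × r` i.i.d. standard Gaussian
matrix, `X = Z ((1/N) ZᵀZ)^{-1/2}` Haar on the normalized Stiefel manifold,
`M = (1/N) VᵀX` and `G = MᵀM`, one has
`P(λ_max(G) > r/N + t) ≤ C(r) exp(-c(r) N t)`. -/
theorem gram_matrix_top_eigenvalue_tail (r : ℕ) (hr : 0 < r) :
    ∃ C c : ℝ, 0 < C ∧ 0 < c ∧
      ∀ (N : ℕ), 0 < N →
      ∀ (Ω : Type) (mΩ : MeasurableSpace Ω) (μ : Measure Ω), IsProbabilityMeasure μ →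
      ∀ (Z : Ω → Matrix (Fin N) (Fin r) ℝ) (V : Matrix (Fin N) (Fin r) ℝ),
        Vᵀ * V = (N : ℝ) • 1 →
        (∀ k l, Measurable fun ω => Z ω k l) →
        (∀ k l, Measure.map (fun ω => Z ω k l) μ = ProbabilityTheory.gaussianReal 0 1) →
        ProbabilityTheory.iIndepFun
          (fun (p : Fin N × Fin r) ω => Z ω p.1 p.2) μ →
      ∀ t : ℝ, 0 < t →
        μ {ω |
            let X := Z ω * (psdSqrt ((N : ℝ)⁻¹ • ((Z ω)ᵀ * Z ω)))⁻¹
            let M := (N : ℝ)⁻¹ • (Vᵀ * X)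
            (r : ℝ) / N + t < eigMaxOf (Mᵀ * M)}
          ≤ ENNReal.ofReal (C * Real.exp (-c * N * t)) := by
  have hrpos : (0:ℝ) < r := Nat.cast_pos.mpr hr
  refine ⟨4*(r:ℝ)^2, (32*(r:ℝ)^2)⁻¹, by positivity, by positivity, ?_⟩
  intro N hN Ω mΩ μ hprob Z V hV hmeas hmap hind t ht
  haveI := hprob
  have hNpos : (0:ℝ) < N := Nat.cast_pos.mpr hN
  set c : ℝ := (32*(r:ℝ)^2)⁻¹ with hc
  set E : Set Ω := {ω |
      let X := Z ω * (psdSqrt ((N : ℝ)⁻¹ • ((Z ω)ᵀ * Z ω)))⁻¹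
      let M := (N : ℝ)⁻¹ • (Vᵀ * X)
      (r : ℝ) / N + t < eigMaxOf (Mᵀ * M)} with hE
  by_cases ht1 : 1 ≤ t
  · -- deterministic: event is empty
    have hE0 : μ E = 0 := by
      apply measure_mono_null (t := (∅ : Set Ω)) ?_ measure_empty
      intro ω hω
      have hω' : (r : ℝ) / N + t < eigMaxOf
          ((((N:ℝ)⁻¹ • (Vᵀ * (Z ω * (psdSqrt ((N:ℝ)⁻¹ • ((Z ω)ᵀ * Z ω)))⁻¹)))ᵀ) *
            ((N:ℝ)⁻¹ • (Vᵀ * (Z ω * (psdSqrt ((N:ℝ)⁻¹ • ((Z ω)ᵀ * Z ω)))⁻¹)))) := hω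
      exact absurd hω' (not_lt.mpr
        (det_bound hr hN (Z ω) V hV t ht (Or.inl ht1) _ rfl))
    rw [hE0]
    exact zero_le
  · -- probabilistic bound
    have ht1' : t ≤ 1 := le_of_not_ge ht1
    set u : ℝ := (N:ℝ) * Real.sqrt (t/2) / r with hu
    set EQs : Fin r → Fin r → ℝ → Set Ω := fun i j σ =>
      {ω | (N:ℝ)/(2*r) ≤ ∑ k : Fin N, σ * (Z ω k i * Z ω k j - (if i = j then 1 else 0))}
      with hEQs
    set ELs : Fin r → Fin r → ℝ → Set Ω := fun i j σ =>
      {ω | u ≤ ∑ k : Fin N, σ * (V k i * Z ω k j)} with hELs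
    set F : Fin r × Fin r → Set Ω := fun p =>
      EQs p.1 p.2 1 ∪ EQs p.1 p.2 (-1) ∪ ELs p.1 p.2 1 ∪ ELs p.1 p.2 (-1) with hF
    have hsub : E ⊆ ⋃ p ∈ (Finset.univ : Finset (Fin r × Fin r)), F p := by
      intro ω hω
      by_contra hnot
      simp only [Set.mem_iUnion, not_exists, hF, Set.mem_union, not_or, hEQs, hELs,
        Set.mem_setOf_eq, Finset.mem_univ, exists_true_left] at hnot
      have hgA : ∀ i j, |((N:ℝ)⁻¹ • ((Z ω)ᵀ * Z ω)) i j - (if i = j then (1:ℝ) else 0)|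
          ≤ (2*(r:ℝ))⁻¹ := by
        intro i j
        obtain ⟨⟨⟨hq1, hq2⟩, _⟩, _⟩ := hnot (i, j)
        set d : ℝ := if i = j then (1:ℝ) else 0 with hd
        set T : ℝ := ∑ k : Fin N, (Z ω k i * Z ω k j - d) with hT
        have h1 : T < (N:ℝ)/(2*r) := by
          refine lt_of_not_ge fun hcon => hq1 ?_
          calc (N:ℝ)/(2*r) ≤ T := hcon
            _ = ∑ k : Fin N, 1 * (Z ω k i * Z ω k j - d) := by
                rw [hT]; apply Finset.sum_congr rfl; intros; ring
        have h2 : -T < (N:ℝ)/(2*r) := by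
          refine lt_of_not_ge fun hcon => hq2 ?_
          calc (N:ℝ)/(2*r) ≤ -T := hcon
            _ = ∑ k : Fin N, (-1) * (Z ω k i * Z ω k j - d) := by
                rw [hT, ← Finset.sum_neg_distrib]
                apply Finset.sum_congr rfl; intros; ring
        have habsT : |T| ≤ (N:ℝ)/(2*r) := abs_le.mpr ⟨by linarith, by linarith⟩
        have hentry : ((N:ℝ)⁻¹ • ((Z ω)ᵀ * Z ω)) i j
            = (N:ℝ)⁻¹ * ∑ k : Fin N, Z ω k i * Z ω k j := by
          simp [Matrix.smul_apply, Matrix.mul_apply, Matrix.transpose_apply, smul_eq_mul]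
        have hTsum : T = (∑ k : Fin N, Z ω k i * Z ω k j) - (N:ℝ) * d := by
          rw [hT, Finset.sum_sub_distrib, Finset.sum_const, Finset.card_univ,
            Fintype.card_fin, nsmul_eq_mul]
        have heq : ((N:ℝ)⁻¹ • ((Z ω)ᵀ * Z ω)) i j - d = (N:ℝ)⁻¹ * T := by
          rw [hentry, hTsum]
          field_simp
        rw [heq, abs_mul, abs_of_pos (by positivity : (0:ℝ) < (N:ℝ)⁻¹)]
        calc (N:ℝ)⁻¹ * |T| ≤ (N:ℝ)⁻¹ * ((N:ℝ)/(2*r)) :=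
              mul_le_mul_of_nonneg_left habsT (by positivity)
          _ = (2*(r:ℝ))⁻¹ := by field_simp
      have hgY : ∀ i j, |(Vᵀ * Z ω) i j| ≤ (N:ℝ) * Real.sqrt (t/2) / r := by
        intro i j
        obtain ⟨⟨_, hl1⟩, hl2⟩ := hnot (i, j)
        set Y : ℝ := ∑ k : Fin N, V k i * Z ω k j with hY
        have h1 : Y < u := by
          refine lt_of_not_ge fun hcon => hl1 ?_
          calc u ≤ Y := hcon
            _ = ∑ k : Fin N, 1 * (V k i * Z ω k j) := by
                rw [hY]; apply Finset.sum_congr rfl; intros; ring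
        have h2 : -Y < u := by
          refine lt_of_not_ge fun hcon => hl2 ?_
          calc u ≤ -Y := hcon
            _ = ∑ k : Fin N, (-1) * (V k i * Z ω k j) := by
                rw [hY, ← Finset.sum_neg_distrib]
                apply Finset.sum_congr rfl; intros; ring
        have hentry : (Vᵀ * Z ω) i j = Y := by
          rw [hY]
          simp [Matrix.mul_apply, Matrix.transpose_apply]
        rw [hentry, hu] at *
        exact abs_le.mpr ⟨by linarith, by linarith⟩
      have hω' : (r : ℝ) / N + t < eigMaxOf
          ((((N:ℝ)⁻¹ • (Vᵀ * (Z ω * (psdSqrt ((N:ℝ)⁻¹ • ((Z ω)ᵀ * Z ω)))⁻¹)))ᵀ) *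
            ((N:ℝ)⁻¹ • (Vᵀ * (Z ω * (psdSqrt ((N:ℝ)⁻¹ • ((Z ω)ᵀ * Z ω)))⁻¹)))) := hω
      exact absurd hω' (not_lt.mpr
        (det_bound hr hN (Z ω) V hV t ht (Or.inr ⟨hgA, hgY⟩) _ rfl))
    -- column norms of V
    have hVcol : ∀ i : Fin r, ∑ k : Fin N, (V k i)^2 = (N:ℝ) := by
      intro i
      have h := congrArg (fun A => A i i) hV
      simp only [Matrix.mul_apply, Matrix.transpose_apply, Matrix.smul_apply,
        Matrix.one_apply_eq, smul_eq_mul, mul_one] at h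
      rw [← h]
      apply Finset.sum_congr rfl; intros; ring
    set e : ℝ≥0∞ := ENNReal.ofReal (Real.exp (-c * N * t)) with he
    have hQrelax : ENNReal.ofReal (Real.exp (-(N:ℝ)/(32*(r:ℝ)^2))) ≤ e := by
      rw [he]
      apply ENNReal.ofReal_le_ofReal
      apply Real.exp_le_exp.mpr
      rw [hc]
      have h0 : (0:ℝ) ≤ (32*(r:ℝ)^2)⁻¹ := by positivity
      have h2 : (32*(r:ℝ)^2)⁻¹ * (N:ℝ) * t ≤ (32*(r:ℝ)^2)⁻¹ * (N:ℝ) := by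
        nlinarith [mul_nonneg h0 hNpos.le]
      calc -(N:ℝ)/(32*(r:ℝ)^2) = -((32*(r:ℝ)^2)⁻¹ * (N:ℝ)) := by
            field_simp
        _ ≤ -((32*(r:ℝ)^2)⁻¹ * (N:ℝ) * t) := by linarith
        _ = -(32*(r:ℝ)^2)⁻¹ * (N:ℝ) * t := by ring
    have hLrelax : ENNReal.ofReal (Real.exp (-(N:ℝ)*t/(4*(r:ℝ)^2))) ≤ e := by
      rw [he]
      apply ENNReal.ofReal_le_ofReal
      apply Real.exp_le_exp.mpr
      rw [hc]
      have hNt : (0:ℝ) ≤ (N:ℝ)*t := by positivity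
      have key : (32*(r:ℝ)^2)⁻¹ ≤ (4*(r:ℝ)^2)⁻¹ := inv_anti₀ (by positivity) (by nlinarith)
      have h2 : (32*(r:ℝ)^2)⁻¹ * ((N:ℝ)*t) ≤ (4*(r:ℝ)^2)⁻¹ * ((N:ℝ)*t) :=
        mul_le_mul_of_nonneg_right key hNt
      calc -(N:ℝ)*t/(4*(r:ℝ)^2) = -((4*(r:ℝ)^2)⁻¹ * ((N:ℝ)*t)) := by
            field_simp
        _ ≤ -((32*(r:ℝ)^2)⁻¹ * ((N:ℝ)*t)) := by linarith
        _ = -(32*(r:ℝ)^2)⁻¹ * (N:ℝ) * t := by ring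
    have hFp : ∀ p : Fin r × Fin r, μ (F p) ≤ e + e + e + e := by
      intro p
      have b1 := le_trans (EQ_tail hr Z hmeas hmap hind p.1 p.2 1 (Or.inl rfl)) hQrelax
      have b2 := le_trans (EQ_tail hr Z hmeas hmap hind p.1 p.2 (-1) (Or.inr rfl)) hQrelax
      have b3 := le_trans (EL_tail hr Z hmeas hmap hind p.2 (fun k => V k p.1)
        (hVcol p.1) 1 (Or.inl rfl) t ht) hLrelax
      have b4 := le_trans (EL_tail hr Z hmeas hmap hind p.2 (fun k => V k p.1)
        (hVcol p.1) (-1) (Or.inr rfl) t ht) hLrelax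
      calc μ (F p) ≤ μ (EQs p.1 p.2 1 ∪ EQs p.1 p.2 (-1) ∪ ELs p.1 p.2 1)
            + μ (ELs p.1 p.2 (-1)) := measure_union_le _ _
        _ ≤ (μ (EQs p.1 p.2 1 ∪ EQs p.1 p.2 (-1)) + μ (ELs p.1 p.2 1))
            + μ (ELs p.1 p.2 (-1)) := by
            exact add_le_add_left (measure_union_le _ _) _
        _ ≤ ((μ (EQs p.1 p.2 1) + μ (EQs p.1 p.2 (-1))) + μ (ELs p.1 p.2 1))
            + μ (ELs p.1 p.2 (-1)) := by
            exact add_le_add_left (add_le_add_left (measure_union_le _ _) _) _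
        _ ≤ e + e + e + e := by
            exact add_le_add (add_le_add (add_le_add b1 b2) b3) b4
    calc μ E ≤ μ (⋃ p ∈ (Finset.univ : Finset (Fin r × Fin r)), F p) := measure_mono hsub
      _ ≤ ∑ p ∈ (Finset.univ : Finset (Fin r × Fin r)), μ (F p) :=
          measure_biUnion_finset_le _ _
      _ ≤ ∑ _p ∈ (Finset.univ : Finset (Fin r × Fin r)), (e + e + e + e) :=
          Finset.sum_le_sum fun p _ => hFp p
      _ = (r*r : ℕ) • (e + e + e + e) := by
          rw [Finset.sum_const, Finset.card_univ]
          congr 1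
          simp [Fintype.card_prod]
      _ ≤ ENNReal.ofReal (4*(r:ℝ)^2 * Real.exp (-c * N * t)) := by
          rw [he]
          rw [← ENNReal.ofReal_add (by positivity) (by positivity),
            ← ENNReal.ofReal_add (by positivity) (by positivity),
            ← ENNReal.ofReal_add (by positivity) (by positivity)]
          rw [nsmul_eq_mul]
          rw [show ((r*r : ℕ) : ℝ≥0∞) = ENNReal.ofReal ((r*r : ℕ) : ℝ) by
            rw [ENNReal.ofReal_natCast]]
          rw [← ENNReal.ofReal_mul (by positivity)]
          apply ENNReal.ofReal_le_ofReal
          push_cast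
          nlinarith [Real.exp_nonneg (-c * N * t)]
end
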